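/- arXiv:1501.00869 — 4 statements merged into one kernel-verified Lean document; each statement's English description precedes it below -/
import Mathlib

section
/- For every finite simple graph G, the edge chromatic number χ'(G) satisfies Δ(G) ≤ χ'(G) ≤ Δ(G) + 1, where Δ(G) is the maximum vertex degree of G. -/
open SimpleGraph

variable {V : Type*}

/-- `c` is a proper edge coloring of `G` using colors `0, …, n-1`:
every edge gets a color `< n`, and distinct edges sharing an endpoint
receive distinct colors. -/
def IsProperEdgeColoring (G : SimpleGraph V) (n : ℕ) (c : Sym2 V → ℕ) : Prop :=
  (∀ e ∈ G.edgeSet, c e < n) ∧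
    ∀ e₁ ∈ G.edgeSet, ∀ e₂ ∈ G.edgeSet, e₁ ≠ e₂ → (∃ v, v ∈ e₁ ∧ v ∈ e₂) →
      c e₁ ≠ c e₂

/-- The edge chromatic number `χ'(G)`: the least number of colors in a proper
edge coloring of `G`. -/
noncomputable def edgeChromaticNumber (G : SimpleGraph V) : ℕ :=
  sInf {n | ∃ c, IsProperEdgeColoring G n c}

/-- The degree `d_G(v)` of a vertex. -/
noncomputable def deg (G : SimpleGraph V) (v : V) : ℕ := (G.neighborSet v).ncard

/-- The maximum vertex degree `Δ(G)`. -/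
noncomputable def maxDeg (G : SimpleGraph V) : ℕ := sSup {d | ∃ v, deg G v = d}

/-- `G` is critical: it is class 2 (i.e. `χ'(G) ≠ Δ(G)`) and every proper
subgraph `H` of `G` satisfies `χ'(H) < χ'(G)`. -/
def IsCritical (G : SimpleGraph V) : Prop :=
  edgeChromaticNumber G ≠ maxDeg G ∧
    ∀ H : G.Subgraph, H ≠ ⊤ → edgeChromaticNumber H.coe < edgeChromaticNumber G

/-- `G` is `k`-critical: critical with maximum degree `k`. -/
def IsKCritical (G : SimpleGraph V) (k : ℕ) : Prop :=
  IsCritical G ∧ maxDeg G = k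

/-! ### Auxiliary machinery for Vizing's theorem -/

open scoped Classical

section PathLemmas

variable {K : SimpleGraph V}

lemma Vizing.prefix_lemma
    (h2 : ∀ w a b c, K.Adj w a → K.Adj w b → K.Adj w c → a = b ∨ a = c ∨ b = c) :
    ∀ {x y z : V} (p : K.Walk x y) (q : K.Walk x z), p.IsPath → q.IsPath →
      (∀ a b, K.Adj x a → K.Adj x b → a ∈ p.support → b ∈ q.support → a = b) →
      ((∀ w ∈ p.support, w ∈ q.support) ∨ (∀ w ∈ q.support, w ∈ p.support)) := by
  intro x y z p
  induction p with
  | nil =>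
    intro q _ _ _
    left; intro w hw
    simp only [Walk.support_nil, List.mem_singleton] at hw
    subst hw; exact Walk.start_mem_support q
  | @cons x v y h p' ih =>
    intro q hp hq hinv
    cases q with
    | nil =>
      right; intro w hw
      simp only [Walk.support_nil, List.mem_singleton] at hw
      subst hw; exact Walk.start_mem_support _
    | @cons _ v' _ h' q' =>
      have hvv' : v = v' := by
        apply hinv v v' h h'
        · rw [Walk.support_cons]; exact List.mem_cons_of_mem _ (Walk.start_mem_support p')
        · rw [Walk.support_cons]; exact List.mem_cons_of_mem _ (Walk.start_mem_support q')
      subst hvv'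
      rw [Walk.cons_isPath_iff] at hp hq
      have hinv' : ∀ a b, K.Adj v a → K.Adj v b → a ∈ p'.support → b ∈ q'.support →
          a = b := by
        intro a b hva hvb hap hbq
        rcases h2 v a b x hva hvb h.symm with h1 | h1 | h1
        · exact h1
        · exact absurd (h1 ▸ hap) hp.2
        · exact absurd (h1 ▸ hbq) hq.2
      rcases ih q' hp.1 hq.1 hinv' with hsub | hsub
      · left; intro w hw
        rw [Walk.support_cons, List.mem_cons] at hw ⊢
        rcases hw with rfl | hw
        · exact Or.inl rfl
        · exact Or.inr (hsub w hw)
      · right; intro w hw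
        rw [Walk.support_cons, List.mem_cons] at hw ⊢
        rcases hw with rfl | hw
        · exact Or.inl rfl
        · exact Or.inr (hsub w hw)

lemma Vizing.internal_vertex {x z a : V} (q : K.Walk x z) (hq : q.IsPath)
    (ha : a ∈ q.support) (hax : a ≠ x) (haz : a ≠ z)
    (uniq : ∀ b c, K.Adj a b → K.Adj a c → b = c) : False := by
  induction q with
  | nil => simp at ha; exact hax ha
  | @cons x v z h q' ih =>
    rw [Walk.cons_isPath_iff] at hq
    rw [Walk.support_cons, List.mem_cons] at ha
    rcases ha with h0 | ha'
    · exact hax h0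
    · by_cases hav : a = v
      · subst hav
        cases q' with
        | nil => exact haz rfl
        | @cons _ w _ h2 q'' =>
          have hxw : x = w := uniq x w h.symm h2
          apply hq.2
          rw [Walk.support_cons, hxw]
          exact List.mem_cons_of_mem _ (Walk.start_mem_support q'')
      · exact ih hq.1 ha' hav haz

/-- In a graph of maximum degree at most two, a connected component cannot
contain three distinct vertices of degree at most one. -/
lemma Vizing.no_three
    (h2 : ∀ w a b c, K.Adj w a → K.Adj w b → K.Adj w c → a = b ∨ a = c ∨ b = c)
    {u a b : V}
    (hu : ∀ s t, K.Adj u s → K.Adj u t → s = t)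
    (ha : ∀ s t, K.Adj a s → K.Adj a t → s = t)
    (hb : ∀ s t, K.Adj b s → K.Adj b t → s = t)
    (hua : u ≠ a) (hub : u ≠ b) (hab : a ≠ b)
    (hra : K.Reachable u a) (hrb : K.Reachable u b) : False := by
  obtain ⟨p0⟩ := hra
  obtain ⟨q0⟩ := hrb
  let p := p0.toPath.1
  have hp : p.IsPath := p0.toPath.2
  let q := q0.toPath.1
  have hq : q.IsPath := q0.toPath.2
  have hinv : ∀ s t, K.Adj u s → K.Adj u t → s ∈ p.support → t ∈ q.support → s = t :=
    fun s t hs ht _ _ => hu s t hs ht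
  rcases Vizing.prefix_lemma h2 p q hp hq hinv with hsub | hsub
  · exact Vizing.internal_vertex q hq (hsub a (Walk.end_mem_support p)) (Ne.symm hua) hab ha
  · exact Vizing.internal_vertex p hp (hsub b (Walk.end_mem_support q)) (Ne.symm hub)
      (Ne.symm hab) hb

end PathLemmas

/-- Properness of an edge coloring on a finite set of edges. -/
def VProper (n : ℕ) (E : Finset (Sym2 V)) (c : Sym2 V → ℕ) : Prop :=
  (∀ e ∈ E, c e < n) ∧
    ∀ e₁ ∈ E, ∀ e₂ ∈ E, e₁ ≠ e₂ → (∃ v, v ∈ e₁ ∧ v ∈ e₂) → c e₁ ≠ c e₂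

/-- The color `a` is free (unused) at the vertex `x`. -/
def VFree (n : ℕ) (E : Finset (Sym2 V)) (c : Sym2 V → ℕ) (a : ℕ) (x : V) : Prop :=
  a < n ∧ ∀ e ∈ E, x ∈ e → c e ≠ a

/-- The `α`/`β` Kempe subgraph. -/
def Kk (E : Finset (Sym2 V)) (c : Sym2 V → ℕ) (α β : ℕ) : SimpleGraph V where
  Adj a b := a ≠ b ∧ s(a, b) ∈ E ∧ (c s(a, b) = α ∨ c s(a, b) = β)
  symm := ⟨by
    intro a b ⟨h1, h2, h3⟩
    refine ⟨h1.symm, ?_, ?_⟩ <;> rwa [Sym2.eq_swap]⟩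
  loopless := ⟨fun a h => h.1 rfl⟩

/-- Swap the colors `α`, `β` on the Kempe component of `x`. -/
noncomputable def swp (E : Finset (Sym2 V)) (c : Sym2 V → ℕ) (α β : ℕ) (x : V)
    (e : Sym2 V) : ℕ :=
  if e ∈ E ∧ (c e = α ∨ c e = β) ∧ (∃ w ∈ e, (Kk E c α β).Reachable x w) then
    (if c e = α then β else α) else c e

section Swap
variable {n : ℕ} {E : Finset (Sym2 V)} {c : Sym2 V → ℕ} {α β : ℕ} {x : V}

/-- If an edge of the Kempe subgraph has one endpoint reachable from `x`, all its
endpoints are. -/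
lemma edge_reach {e : Sym2 V} (he : e ∈ E)
    (hc : c e = α ∨ c e = β) {w₁ w₂ : V} (h1 : w₁ ∈ e) (h2 : w₂ ∈ e)
    (hr : (Kk E c α β).Reachable x w₁) : (Kk E c α β).Reachable x w₂ := by
  by_cases h12 : w₁ = w₂
  · rwa [h12] at hr
  · have he12 : e = s(w₁, w₂) := (Sym2.mem_and_mem_iff h12).mp ⟨h1, h2⟩
    have hadj : (Kk E c α β).Adj w₁ w₂ := ⟨h12, he12 ▸ he, he12 ▸ hc⟩
    exact hr.trans hadj.reachable

lemma swp_lt (hαn : α < n) (hβn : β < n) (hc : VProper n E c) {e : Sym2 V} (he : e ∈ E) :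
    swp E c α β x e < n := by
  unfold swp
  split_ifs <;> first | exact hβn | exact hαn | exact hc.1 e he

/-- Untouched edges: any edge with an endpoint not reachable from `x`. -/
lemma swp_eq_of_not_reach {e : Sym2 V} (he : e ∈ E) {w : V}
    (hw : w ∈ e) (hr : ¬ (Kk E c α β).Reachable x w) : swp E c α β x e = c e := by
  unfold swp
  rw [if_neg]
  rintro ⟨h1, h2, w', hw', hr'⟩
  exact hr (edge_reach he h2 hw' hw hr')

/-- The swap preserves properness. -/
lemma swp_proper (hαn : α < n) (hβn : β < n)
    (hc : VProper n E c) : VProper n E (swp E c α β x) := by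
  constructor
  · exact fun e he => swp_lt hαn hβn hc he
  · intro e₁ he₁ e₂ he₂ hne hshare
    have key : ∀ f₁ ∈ E, ∀ f₂ ∈ E, f₁ ≠ f₂ → (∃ v, v ∈ f₁ ∧ v ∈ f₂) →
        (f₁ ∈ E ∧ (c f₁ = α ∨ c f₁ = β) ∧ (∃ w ∈ f₁, (Kk E c α β).Reachable x w)) →
        ¬ (f₂ ∈ E ∧ (c f₂ = α ∨ c f₂ = β) ∧ (∃ w ∈ f₂, (Kk E c α β).Reachable x w)) →
        swp E c α β x f₁ ≠ swp E c α β x f₂ := by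
      intro f₁ hf₁ f₂ hf₂ hne ⟨w, hw1, hw2⟩ hP1 hP2
      have e1 : swp E c α β x f₁ = if c f₁ = α then β else α := by
        unfold swp; rw [if_pos hP1]
      have e2 : swp E c α β x f₂ = c f₂ := by unfold swp; rw [if_neg hP2]
      rw [e1, e2]
      obtain ⟨w', hw', hr'⟩ := hP1.2.2
      have hwr : (Kk E c α β).Reachable x w := edge_reach hf₁ hP1.2.1 hw' hw1 hr'
      intro heq
      have hcf₂ : c f₂ = α ∨ c f₂ = β := by
        rcases hP1.2.1 with h | h <;> [skip; skip] <;>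
          · rw [← heq]; split_ifs <;> simp
      exact hP2 ⟨hf₂, hcf₂, w, hw2, hwr⟩
    by_cases hP1 : e₁ ∈ E ∧ (c e₁ = α ∨ c e₁ = β) ∧ (∃ w ∈ e₁, (Kk E c α β).Reachable x w) <;>
      by_cases hP2 : e₂ ∈ E ∧ (c e₂ = α ∨ c e₂ = β) ∧ (∃ w ∈ e₂, (Kk E c α β).Reachable x w)
    · have e1 : swp E c α β x e₁ = if c e₁ = α then β else α := by
        unfold swp; rw [if_pos hP1]
      have e2 : swp E c α β x e₂ = if c e₂ = α then β else α := by
        unfold swp; rw [if_pos hP2]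
      have hcc : c e₁ ≠ c e₂ := hc.2 e₁ he₁ e₂ he₂ hne hshare
      rw [e1, e2]
      by_cases hαβ : α = β
      · subst hαβ
        rcases hP1.2.1 with h1 | h1 <;> rcases hP2.2.1 with h2 | h2 <;>
          exact absurd (h1.trans h2.symm) hcc
      · rcases hP1.2.1 with h1 | h1 <;> rcases hP2.2.1 with h2 | h2
        · exact absurd (h1.trans h2.symm) hcc
        · rw [if_pos h1, if_neg (by rw [h2]; exact fun hh => hαβ hh.symm)]
          exact fun hh => hαβ hh.symm
        · rw [if_neg (by rw [h1]; exact fun hh => hαβ hh.symm), if_pos h2]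
          exact hαβ
        · exact absurd (h1.trans h2.symm) hcc
    · exact key e₁ he₁ e₂ he₂ hne hshare hP1 hP2
    · obtain ⟨w, hw1, hw2⟩ := hshare
      exact (key e₂ he₂ e₁ he₁ hne.symm ⟨w, hw2, hw1⟩ hP2 hP1).symm
    · have e1 : swp E c α β x e₁ = c e₁ := by unfold swp; rw [if_neg hP1]
      have e2 : swp E c α β x e₂ = c e₂ := by unfold swp; rw [if_neg hP2]
      rw [e1, e2]; exact hc.2 e₁ he₁ e₂ he₂ hne hshare

/-- Freeness is preserved at vertices not reachable from `x`. -/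
lemma swp_free_far {a : ℕ} {y : V}
    (hr : ¬ (Kk E c α β).Reachable x y) (hf : VFree n E c a y) :
    VFree n E (swp E c α β x) a y := by
  refine ⟨hf.1, fun e he hy => ?_⟩
  rw [swp_eq_of_not_reach he hy hr]
  exact hf.2 e he hy

/-- After swapping the component of `x`, if `β` was free at `x` then `α` is. -/
lemma swp_free_at (hαn : α < n) (hf : VFree n E c β x) :
    VFree n E (swp E c α β x) α x := by
  refine ⟨hαn, fun e he hx heq => ?_⟩
  by_cases hP : e ∈ E ∧ (c e = α ∨ c e = β) ∧ (∃ w ∈ e, (Kk E c α β).Reachable x w)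
  · have e1 : swp E c α β x e = if c e = α then β else α := by unfold swp; rw [if_pos hP]
    rcases hP.2.1 with h | h
    · rw [e1, if_pos h] at heq
      exact hf.2 e he hx (h.trans heq.symm)
    · exact hf.2 e he hx h
  · have e1 : swp E c α β x e = c e := by unfold swp; rw [if_neg hP]
    rw [e1] at heq
    exact hP ⟨he, Or.inl heq, x, hx, Reachable.refl x⟩

/-- Freeness in colors other than `α`, `β` is preserved everywhere. -/
lemma swp_free_other {δ : ℕ} (hδα : δ ≠ α) (hδβ : δ ≠ β) {y : V}
    (hf : VFree n E c δ y) : VFree n E (swp E c α β x) δ y := by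
  refine ⟨hf.1, fun e he hy heq => ?_⟩
  by_cases hP : e ∈ E ∧ (c e = α ∨ c e = β) ∧ (∃ w ∈ e, (Kk E c α β).Reachable x w)
  · have e1 : swp E c α β x e = if c e = α then β else α := by unfold swp; rw [if_pos hP]
    rw [e1] at heq
    split_ifs at heq <;> [exact hδβ heq.symm; exact hδα heq.symm]
  · have e1 : swp E c α β x e = c e := by unfold swp; rw [if_neg hP]
    rw [e1] at heq
    exact hf.2 e he hy heq

/-- The Kempe graph has maximum degree at most two (pigeonhole form). -/
lemma kk_deg_two (hc : VProper n E c) :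
    ∀ w a b d, (Kk E c α β).Adj w a → (Kk E c α β).Adj w b → (Kk E c α β).Adj w d →
      a = b ∨ a = d ∨ b = d := by
  intro w a b d ⟨ha1, ha2, ha3⟩ ⟨hb1, hb2, hb3⟩ ⟨hd1, hd2, hd3⟩
  by_contra hcon
  push_neg at hcon
  obtain ⟨hab, had, hbd⟩ := hcon
  have h1 : c s(w, a) ≠ c s(w, b) := hc.2 _ ha2 _ hb2
    (fun h => hab (Sym2.congr_right.mp h)) ⟨w, by simp, by simp⟩
  have h2 : c s(w, a) ≠ c s(w, d) := hc.2 _ ha2 _ hd2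
    (fun h => had (Sym2.congr_right.mp h)) ⟨w, by simp, by simp⟩
  have h3 : c s(w, b) ≠ c s(w, d) := hc.2 _ hb2 _ hd2
    (fun h => hbd (Sym2.congr_right.mp h)) ⟨w, by simp, by simp⟩
  rcases ha3 with h | h <;> rcases hb3 with h' | h' <;> rcases hd3 with h'' | h'' <;> omega

/-- A vertex at which `α` or `β` is free has at most one Kempe neighbour. -/
lemma kk_deg_one (hc : VProper n E c) {γ : ℕ} (hγ : γ = α ∨ γ = β) {y : V}
    (hf : VFree n E c γ y) :
    ∀ a b, (Kk E c α β).Adj y a → (Kk E c α β).Adj y b → a = b := by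
  intro a b ⟨ha1, ha2, ha3⟩ ⟨hb1, hb2, hb3⟩
  by_contra hab
  have h1 : c s(y, a) ≠ c s(y, b) := hc.2 _ ha2 _ hb2
    (fun h => hab (Sym2.congr_right.mp h)) ⟨y, by simp, by simp⟩
  have hfa : c s(y, a) ≠ γ := hf.2 _ ha2 (by simp)
  have hfb : c s(y, b) ≠ γ := hf.2 _ hb2 (by simp)
  rcases hγ with rfl | rfl <;> rcases ha3 with h | h <;> rcases hb3 with h' | h' <;> omega

end Swap

/-- Rotate the fan `u–f 0, …, u–f t` and give `u–f t` the color `γ`. -/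
noncomputable def rot (c : Sym2 V → ℕ) (u : V) (f : ℕ → V) (t : ℕ) (γ : ℕ)
    (e : Sym2 V) : ℕ :=
  if h : ∃ i, i ≤ t ∧ e = s(u, f i) then
    (if Nat.find h = t then γ else c s(u, f (Nat.find h + 1))) else c e

section Rot
variable {n : ℕ} {E : Finset (Sym2 V)} {c : Sym2 V → ℕ} {u v : V} {f : ℕ → V} {t γ : ℕ}

lemma rot_fan (hinj : ∀ i j, i ≤ t → j ≤ t → f i = f j → i = j) {i : ℕ} (hi : i ≤ t) :
    rot c u f t γ (s(u, f i)) = if i = t then γ else c s(u, f (i + 1)) := by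
  have h : ∃ j, j ≤ t ∧ s(u, f i) = s(u, f j) := ⟨i, hi, rfl⟩
  rw [rot, dif_pos h]
  have hspec := Nat.find_spec h
  have : Nat.find h = i := hinj _ _ hspec.1 hi (Sym2.congr_right.mp hspec.2).symm
  simp only [this]

lemma rot_not {e : Sym2 V} (he : ¬ ∃ i, i ≤ t ∧ e = s(u, f i)) :
    rot c u f t γ e = c e := by
  rw [rot, dif_neg he]

theorem rotate (hc : VProper n E c)
    (hf0 : f 0 = v)
    (hinj : ∀ i j, i ≤ t → j ≤ t → f i = f j → i = j)
    (hfE : ∀ i, 1 ≤ i → i ≤ t → s(u, f i) ∈ E)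
    (hfree : ∀ i, i < t → VFree n E c (c s(u, f (i + 1))) (f i))
    (hγu : VFree n E c γ u) (hγt : VFree n E c γ (f t)) :
    ∃ c', VProper n (insert s(u, v) E) c' := by
  refine ⟨rot c u f t γ, ?_, ?_⟩
  · intro e he
    by_cases hF : ∃ i, i ≤ t ∧ e = s(u, f i)
    · obtain ⟨i, hi, rfl⟩ := hF
      rw [rot_fan hinj hi]
      split_ifs with h
      · exact hγu.1
      · exact hc.1 _ (hfE (i + 1) (by omega) (by omega))
    · rw [rot_not hF]
      rcases Finset.mem_insert.mp he with h | h
      · exact absurd ⟨0, Nat.zero_le t, by rw [h, hf0]⟩ hF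
      · exact hc.1 e h
  · have fanval : ∀ i, i ≤ t →
        rot c u f t γ (s(u, f i)) = if i = t then γ else c s(u, f (i + 1)) :=
      fun i hi => rot_fan hinj hi
    have nonfan : ∀ e ∈ insert s(u, v) E, ¬ (∃ i, i ≤ t ∧ e = s(u, f i)) →
        e ∈ E ∧ rot c u f t γ e = c e := by
      intro e he hF
      rcases Finset.mem_insert.mp he with h | h
      · exact absurd ⟨0, Nat.zero_le t, by rw [h, hf0]⟩ hF
      · exact ⟨h, rot_not hF⟩
    have key : ∀ e₂ ∈ insert s(u, v) E, ∀ i, i ≤ t → e₂ ≠ s(u, f i) →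
        ¬ (∃ j, j ≤ t ∧ e₂ = s(u, f j)) → (∃ w, w ∈ s(u, f i) ∧ w ∈ e₂) →
        rot c u f t γ (s(u, f i)) ≠ rot c u f t γ e₂ := by
      intro e₂ he₂ i hi hne12 hF2 ⟨w, hw1, hw2⟩
      obtain ⟨he₂E, hval₂⟩ := nonfan e₂ he₂ hF2
      rw [fanval i hi, hval₂]
      rcases Sym2.mem_iff.mp hw1 with h | h <;> rw [h] at hw2
      · split_ifs with h
        · exact (hγu.2 e₂ he₂E hw2).symm
        · have hne2 : s(u, f (i + 1)) ≠ e₂ := fun hh => hF2 ⟨i + 1, by omega, hh.symm⟩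
          exact hc.2 _ (hfE (i + 1) (by omega) (by omega)) _ he₂E hne2
            ⟨u, by simp, hw2⟩
      · split_ifs with h
        · subst h; exact (hγt.2 e₂ he₂E hw2).symm
        · exact ((hfree i (by omega)).2 e₂ he₂E hw2).symm
    intro e₁ he₁ e₂ he₂ hne' hshare
    by_cases hF1 : ∃ i, i ≤ t ∧ e₁ = s(u, f i) <;>
      by_cases hF2 : ∃ j, j ≤ t ∧ e₂ = s(u, f j)
    · obtain ⟨i, hi, rfl⟩ := hF1
      obtain ⟨j, hj, rfl⟩ := hF2
      have hij : i ≠ j := fun h => hne' (by rw [h])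
      rw [fanval i hi, fanval j hj]
      split_ifs with h1 h2 h2
      · omega
      · exact (hγu.2 _ (hfE (j + 1) (by omega) (by omega)) (by simp)).symm
      · exact hγu.2 _ (hfE (i + 1) (by omega) (by omega)) (by simp)
      · refine hc.2 _ (hfE (i + 1) (by omega) (by omega)) _
          (hfE (j + 1) (by omega) (by omega)) ?_ ⟨u, by simp, by simp⟩
        intro hh
        have := hinj (i + 1) (j + 1) (by omega) (by omega) (Sym2.congr_right.mp hh)
        omega
    · obtain ⟨i, hi, rfl⟩ := hF1
      exact key e₂ he₂ i hi (Ne.symm hne') hF2 hshare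
    · obtain ⟨j, hj, rfl⟩ := hF2
      obtain ⟨w, hw1, hw2⟩ := hshare
      exact (key e₁ he₁ j hj hne' hF1 ⟨w, hw2, hw1⟩).symm
    · obtain ⟨he₁E, hv₁⟩ := nonfan e₁ he₁ hF1
      obtain ⟨he₂E, hv₂⟩ := nonfan e₂ he₂ hF2
      rw [hv₁, hv₂]
      exact hc.2 e₁ he₁E e₂ he₂E hne' hshare

end Rot

section Main
variable [Fintype V] {G : SimpleGraph V} {n : ℕ}

/-- There is always a free color at any vertex of degree `< n`. -/
lemma exists_free {E : Finset (Sym2 V)} (hE : E ⊆ G.edgeFinset)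
    (c : Sym2 V → ℕ) (x : V) (hdeg : deg G x < n) : ∃ a, VFree n E c a x := by
  set T := E.filter (fun e => x ∈ e) with hT
  have hcard : T.card ≤ deg G x := by
    rw [deg, Set.ncard_eq_toFinset_card']
    refine Finset.card_le_card_of_injOn
      (fun e => if h : x ∈ e then Sym2.Mem.other' h else x) ?_ ?_
    · intro e he
      rw [hT, Finset.mem_coe, Finset.mem_filter] at he
      dsimp only
      rw [dif_pos he.2]
      have hspec := Sym2.other_spec' he.2
      have hedge : e ∈ G.edgeSet := SimpleGraph.mem_edgeFinset.mp (hE he.1)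
      rw [← hspec] at hedge
      rw [Finset.mem_coe, Set.mem_toFinset]
      exact (SimpleGraph.mem_edgeSet G).mp hedge
    · intro e₁ he₁ e₂ he₂ heq
      rw [Finset.mem_coe, hT, Finset.mem_filter] at he₁ he₂
      dsimp only at heq
      rw [dif_pos he₁.2, dif_pos he₂.2] at heq
      rw [← Sym2.other_spec' he₁.2, ← Sym2.other_spec' he₂.2, heq]
  have hcard2 : (T.image c).card < n := lt_of_le_of_lt (Finset.card_image_le.trans hcard) hdeg
  have hnot : ¬ (Finset.range n ⊆ T.image c) := by
    intro h
    have := Finset.card_le_card h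
    rw [Finset.card_range] at this
    omega
  obtain ⟨a, ha, hanot⟩ := Finset.not_subset.mp hnot
  refine ⟨a, Finset.mem_range.mp ha, fun e he hx heq => ?_⟩
  exact hanot (Finset.mem_image.mpr ⟨e, by rw [hT, Finset.mem_filter]; exact ⟨he, hx⟩, heq⟩)

/-- The key extension step of Vizing's theorem: a proper `n`-edge-coloring of a
set of edges can be extended by one more edge. -/
theorem extend_coloring {E : Finset (Sym2 V)}
    (hE : E ⊆ G.edgeFinset) (hdeg : ∀ x, deg G x < n) {u v : V} (huv : G.Adj u v)
    (hne : s(u, v) ∉ E) {c : Sym2 V → ℕ} (hc : VProper n E c) :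
    ∃ c', VProper n (insert s(u, v) E) c' := by
  -- the set of fans at u starting with v
  set FanP : (ℕ → V) → ℕ → Prop := fun f s =>
    f 0 = v ∧ (∀ i j, i ≤ s → j ≤ s → f i = f j → i = j) ∧
    (∀ i, 1 ≤ i → i ≤ s → s(u, f i) ∈ E) ∧
    (∀ i, i < s → VFree n E c (c s(u, f (i + 1))) (f i)) with hFanP
  have h0 : FanP (fun _ => v) 0 := by
    refine ⟨rfl, fun i j hi hj _ => by omega, fun i hi1 hi2 => absurd (hi1.trans hi2) (by omega),
      fun i hi => absurd hi (by omega)⟩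
  set S : Set ℕ := {s | ∃ f, FanP f s} with hS
  have hS0 : (0 : ℕ) ∈ S := ⟨fun _ => v, h0⟩
  have hbdd : BddAbove S := by
    refine ⟨Fintype.card V, fun s hs => ?_⟩
    obtain ⟨f, hf⟩ := hs
    have hinj : Function.Injective (fun i : Fin (s + 1) => f i) := by
      intro i j hij
      exact Fin.ext (hf.2.1 i j (by omega) (by omega) hij)
    have := Fintype.card_le_of_injective _ hinj
    simp at this
    omega
  have hmem := Nat.sSup_mem ⟨0, hS0⟩ hbdd
  set s := sSup S with hs
  obtain ⟨f, hf⟩ := hmem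
  obtain ⟨hf0, hfinj, hfE, hffree⟩ := hf
  have hfu : ∀ i, i ≤ s → f i ≠ u := by
    intro i hi
    rcases Nat.eq_zero_or_pos i with h | h
    · rw [h, hf0]; exact huv.ne'
    · have := hfE i h hi
      exact ((G.mem_edgeSet).mp (SimpleGraph.mem_edgeFinset.mp (hE this))).ne'
  obtain ⟨β, hβ⟩ := exists_free hE c (f s) (hdeg _)
  by_cases hβu : ∀ e ∈ E, u ∈ e → c e ≠ β
  · exact rotate hc hf0 hfinj hfE hffree ⟨hβ.1, hβu⟩ hβ
  · push_neg at hβu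
    obtain ⟨e, heE, hue, hceβ⟩ := hβu
    obtain ⟨α, hα⟩ := exists_free hE c u (hdeg u)
    have hw : s(u, Sym2.Mem.other' hue) = e := Sym2.other_spec' hue
    set w := Sym2.Mem.other' hue with hwdef
    -- by maximality, w belongs to the fan
    have hwfan : ∃ i, 1 ≤ i ∧ i ≤ s ∧ f i = w := by
      by_contra hcon
      push_neg at hcon
      have hwv : w ≠ v := fun h => hne (by rw [← h, hw]; exact heE)
      have hwv2 : ∀ j, j ≤ s → f j ≠ w := by
        intro j hj hfjw
        rcases Nat.eq_zero_or_pos j with h | h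
        · rw [h, hf0] at hfjw
          exact hwv hfjw.symm
        · exact hcon j h hj hfjw
      have hext : FanP (fun i => if i = s + 1 then w else f i) (s + 1) := by
        refine ⟨?_, ?_, ?_, ?_⟩
        · dsimp only
          rw [if_neg (Nat.succ_ne_zero s).symm, hf0]
        · intro i j hi hj heq
          dsimp only at heq
          by_cases hi1 : i = s + 1 <;> by_cases hj1 : j = s + 1
          · omega
          · rw [if_pos hi1, if_neg hj1] at heq
            exact absurd heq.symm (hwv2 j (by omega))
          · rw [if_neg hi1, if_pos hj1] at heq
            exact absurd heq (hwv2 i (by omega))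
          · rw [if_neg hi1, if_neg hj1] at heq
            exact hfinj i j (by omega) (by omega) heq
        · intro i hi1 hi2
          dsimp only
          by_cases h : i = s + 1
          · rw [if_pos h, hw]; exact heE
          · rw [if_neg h]; exact hfE i hi1 (by omega)
        · intro i hi
          dsimp only
          by_cases h : i < s
          · rw [if_neg (by omega : ¬ i = s + 1), if_neg (by omega : ¬ i + 1 = s + 1)]
            exact hffree i h
          · have his : i = s := by omega
            subst his
            rw [if_neg (by omega : ¬ s = s + 1), if_pos rfl, hw, hceβ]
            exact hβ
      have : s + 1 ∈ S := ⟨(fun i => if i = s + 1 then w else f i), hext⟩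
      have := le_csSup hbdd this
      omega
    obtain ⟨i0, hi01, hi0s, hfi0⟩ := hwfan
    have hcβ : c s(u, f i0) = β := by rw [hfi0, hw]; exact hceβ
    have hj1 : (i0 - 1) + 1 = i0 := by omega
    set j := i0 - 1 with hjdef
    have hjs : j < s := by omega
    have hβj : VFree n E c β (f j) := by
      have := hffree j (by omega)
      rwa [hj1, hcβ] at this
    have hK2 := kk_deg_two (α := α) (β := β) hc
    have hKu := kk_deg_one (β := β) hc (Or.inl rfl) hα
    have hKj := kk_deg_one (α := α) hc (Or.inr rfl) hβj
    have hKs := kk_deg_one (α := α) hc (Or.inr rfl) hβ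
    have hujne : u ≠ f j := fun h => hfu j (by omega) h.symm
    have husne : u ≠ f s := fun h => hfu s le_rfl h.symm
    have hjsne : f j ≠ f s := fun h => absurd (hfinj j s (by omega) le_rfl h) (by omega)
    have hναne : ∀ i, 1 ≤ i → i ≤ s → c s(u, f i) ≠ α :=
      fun i h1' h2' => hα.2 _ (hfE i h1' h2') (by simp)
    have hνβne : ∀ i, 1 ≤ i → i ≤ s → i ≠ i0 → c s(u, f i) ≠ β := by
      intro i h1' h2' hii0 hh
      have hnee : s(u, f i) ≠ s(u, f i0) := fun hh2 =>
        hii0 (hfinj i i0 h2' (by omega) (Sym2.congr_right.mp hh2))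
      exact hc.2 _ (hfE i h1' h2') _ (hfE i0 (by omega) (by omega)) hnee
        ⟨u, by simp, by simp⟩ (by rw [hh, hcβ])
    by_cases h1 : (Kk E c α β).Reachable u (f j)
    · have h2 : ¬ (Kk E c α β).Reachable u (f s) :=
        fun h => Vizing.no_three hK2 hKu hKj hKs hujne husne hjsne h1 h
      have h3 : ¬ (Kk E c α β).Reachable (f s) u := fun h => h2 h.symm
      have h4 : ¬ (Kk E c α β).Reachable (f s) (f j) := fun h => h2 (h1.trans h.symm)
      refine rotate (c := swp E c α β (f s)) (γ := α) (swp_proper hα.1 hβ.1 hc) hf0 hfinj hfE ?_ ?_ ?_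
      · intro i his
        have hval : swp E c α β (f s) (s(u, f (i + 1))) = c s(u, f (i + 1)) :=
          swp_eq_of_not_reach (hfE (i + 1) (by omega) (by omega)) (by simp) h3
        rw [hval]
        by_cases hij : i = j
        · subst hij
          rw [hj1, hcβ]
          exact swp_free_far h4 hβj
        · refine swp_free_other ?_ ?_ (hffree i his)
          · exact hναne (i + 1) (by omega) (by omega)
          · exact hνβne (i + 1) (by omega) (by omega) (by omega)
      · exact swp_free_far h3 hα
      · exact swp_free_at hα.1 hβ
    · have h3 : ¬ (Kk E c α β).Reachable (f j) u := fun h => h1 h.symm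
      refine rotate (c := swp E c α β (f j)) (t := j) (γ := α) (swp_proper hα.1 hβ.1 hc) hf0 ?_ ?_ ?_ ?_ ?_
      · exact fun i i' hi hi' hh => hfinj i i' (by omega) (by omega) hh
      · exact fun i h1' h2' => hfE i h1' (by omega)
      · intro i hij
        have hval : swp E c α β (f j) (s(u, f (i + 1))) = c s(u, f (i + 1)) :=
          swp_eq_of_not_reach (hfE (i + 1) (by omega) (by omega)) (by simp) h3
        rw [hval]
        refine swp_free_other ?_ ?_ (hffree i (by omega))
        · exact hναne (i + 1) (by omega) (by omega)
        · exact hνβne (i + 1) (by omega) (by omega) (by omega)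
      · exact swp_free_far h3 hα
      · exact swp_free_at hα.1 hβj

/-- Every subset of the edges of `G` admits a proper `n`-edge-coloring whenever
all degrees are `< n`. -/
theorem all_colorable (hdeg : ∀ x, deg G x < n) :
    ∀ E : Finset (Sym2 V), E ⊆ G.edgeFinset → ∃ c, VProper n E c := by
  intro E
  induction E using Finset.induction_on with
  | empty =>
    intro _
    exact ⟨fun _ => 0, fun e he => absurd he (Finset.notMem_empty e),
      fun e he => absurd he (Finset.notMem_empty e)⟩
  | @insert a s ha ih =>
    intro hsub
    have hsub' : s ⊆ G.edgeFinset := fun e he => hsub (Finset.mem_insert_of_mem he)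
    obtain ⟨c, hc⟩ := ih hsub'
    obtain ⟨u, v, rfl⟩ : ∃ u v, a = s(u, v) :=
      Sym2.ind (fun u v => ⟨u, v, rfl⟩) a
    have huv : G.Adj u v :=
      (SimpleGraph.mem_edgeSet G).mp
        (SimpleGraph.mem_edgeFinset.mp (hsub (Finset.mem_insert_self _ _)))
    exact extend_coloring hsub' hdeg huv ha hc

end Main

/-- Vizing's theorem: for every finite simple graph `G`,
`Δ(G) ≤ χ'(G) ≤ Δ(G) + 1`. -/
theorem vizing [Fintype V] (G : SimpleGraph V) :
    maxDeg G ≤ edgeChromaticNumber G ∧ edgeChromaticNumber G ≤ maxDeg G + 1 := by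
  have hdegG : ∀ x, deg G x ≤ Fintype.card V := by
    intro x
    rw [deg, Set.ncard_eq_toFinset_card']
    exact (Finset.card_le_univ _).trans (le_of_eq Finset.card_univ)
  have hbddS : BddAbove {d | ∃ v, deg G v = d} :=
    ⟨Fintype.card V, fun d ⟨y, hy⟩ => hy ▸ hdegG y⟩
  have hdegle : ∀ x, deg G x ≤ maxDeg G := fun x => le_csSup hbddS ⟨x, rfl⟩
  obtain ⟨c, hc⟩ := all_colorable (G := G) (n := maxDeg G + 1)
    (fun x => Nat.lt_succ_of_le (hdegle x)) G.edgeFinset (subset_refl _)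
  have hcol : (maxDeg G + 1) ∈ {n | ∃ c, IsProperEdgeColoring G n c} := by
    refine ⟨c, fun e he => hc.1 e (SimpleGraph.mem_edgeFinset.mpr he),
      fun e₁ h₁ e₂ h₂ => hc.2 e₁ (SimpleGraph.mem_edgeFinset.mpr h₁) e₂
        (SimpleGraph.mem_edgeFinset.mpr h₂)⟩
  constructor
  · refine le_csInf ⟨_, hcol⟩ ?_
    intro m hm
    obtain ⟨cm, hcm⟩ := hm
    have hdm : ∀ x, deg G x ≤ m := by
      intro x
      rw [deg, Set.ncard_eq_toFinset_card']
      calc (G.neighborSet x).toFinset.card ≤ (Finset.range m).card := by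
            refine Finset.card_le_card_of_injOn (fun w => cm s(x, w)) ?_ ?_
            · intro w hw
              rw [Finset.mem_coe, Set.mem_toFinset, SimpleGraph.mem_neighborSet] at hw
              exact Finset.mem_range.mpr (hcm.1 _ ((SimpleGraph.mem_edgeSet G).mpr hw))
            · intro w₁ hw₁ w₂ hw₂ heq
              rw [Finset.mem_coe, Set.mem_toFinset, SimpleGraph.mem_neighborSet] at hw₁ hw₂
              by_contra hnee
              exact hcm.2 _ ((SimpleGraph.mem_edgeSet G).mpr hw₁) _
                ((SimpleGraph.mem_edgeSet G).mpr hw₂)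
                (fun hh => hnee (Sym2.congr_right.mp hh)) ⟨x, by simp, by simp⟩ heq
        _ = m := Finset.card_range m
    rcases isEmpty_or_nonempty V with hV | hV
    · have hemp : {d | ∃ v, deg G v = d} = ∅ := by
        ext d
        simp only [Set.mem_setOf_eq, Set.mem_empty_iff_false, iff_false]
        rintro ⟨v, -⟩
        exact hV.false v
      rw [maxDeg, hemp, csSup_empty]
      exact Nat.zero_le m
    · exact csSup_le ⟨deg G (Classical.arbitrary V), ⟨Classical.arbitrary V, rfl⟩⟩
        (fun d ⟨x, hx⟩ => hx ▸ hdm x)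
  · exact Nat.sInf_le hcol
end

section
/- Every critical graph with at least three vertices is 2-connected. -/
open SimpleGraph

variable {V : Type*}

/-- `G` is 2-connected: it is connected and deleting any single vertex
leaves a connected graph. -/
def IsTwoConnected (G : SimpleGraph V) : Prop :=
  G.Connected ∧ ∀ v : V, (((⊤ : G.Subgraph).deleteVerts {v}).coe).Connected

/-! ### Auxiliary lemmas -/

lemma aux_coloring_mono {G : SimpleGraph V} {n m : ℕ} {c : Sym2 V → ℕ}
    (h : IsProperEdgeColoring G n c) (hnm : n ≤ m) : IsProperEdgeColoring G m c :=
  ⟨fun e he => lt_of_lt_of_le (h.1 e he) hnm, h.2⟩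

lemma aux_exists_coloring [Finite V] (G : SimpleGraph V) :
    ∃ n c, IsProperEdgeColoring G n c := by
  have hfin : G.edgeSet.Finite := Set.toFinite _
  have : Finite ↥G.edgeSet := hfin
  obtain ⟨m, ⟨eqv⟩⟩ := Finite.exists_equiv_fin ↥G.edgeSet
  classical
  refine ⟨m, fun e => if h : e ∈ G.edgeSet then (eqv ⟨e, h⟩ : ℕ) else 0, ?_, ?_⟩
  · intro e he
    simp only [dif_pos he]
    exact (eqv ⟨e, he⟩).isLt
  · intro e₁ h₁ e₂ h₂ hne _
    simp only [dif_pos h₁, dif_pos h₂]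
    intro h
    exact hne (by simpa using congrArg Subtype.val (eqv.injective (Fin.val_injective h)))

lemma aux_ecn_mem [Finite V] (G : SimpleGraph V) :
    ∃ c, IsProperEdgeColoring G (edgeChromaticNumber G) c := by
  obtain ⟨n, c, hc⟩ := aux_exists_coloring G
  exact Nat.sInf_mem (⟨n, c, hc⟩ : {n | ∃ c, IsProperEdgeColoring G n c}.Nonempty)

lemma aux_ecn_le {G : SimpleGraph V} {n : ℕ} (h : ∃ c, IsProperEdgeColoring G n c) :
    edgeChromaticNumber G ≤ n := Nat.sInf_le h

lemma aux_coloring_of_ecn_le [Finite V] {G : SimpleGraph V} {n : ℕ}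
    (h : edgeChromaticNumber G ≤ n) : ∃ c, IsProperEdgeColoring G n c := by
  obtain ⟨c, hc⟩ := aux_ecn_mem G
  exact ⟨c, aux_coloring_mono hc h⟩

lemma aux_deg_eq_ncard_incidence (G : SimpleGraph V) (v : V) :
    deg G v = (G.incidenceSet v).ncard := by
  classical
  rw [deg, ← Nat.card_coe_set_eq, ← Nat.card_coe_set_eq]
  exact Nat.card_congr (G.incidenceSetEquivNeighborSet v).symm

lemma aux_deg_le_of_coloring [Finite V] {G : SimpleGraph V} {n : ℕ} {c : Sym2 V → ℕ}
    (hc : IsProperEdgeColoring G n c) (v : V) : deg G v ≤ n := by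
  classical
  have hinj : Set.InjOn c (G.incidenceSet v) := by
    intro e₁ he₁ e₂ he₂ h
    by_contra hne
    exact hc.2 e₁ he₁.1 e₂ he₂.1 hne ⟨v, he₁.2, he₂.2⟩ h
  have h1 : (G.incidenceSet v).ncard = (c '' G.incidenceSet v).ncard :=
    (Set.ncard_image_of_injOn hinj).symm
  have h2 : c '' G.incidenceSet v ⊆ Set.Iio n := by
    rintro x ⟨e, he, rfl⟩
    exact hc.1 e he.1
  have h3 : (c '' G.incidenceSet v).ncard ≤ (Set.Iio n).ncard :=
    Set.ncard_le_ncard h2 (Set.finite_Iio n)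
  have h4 : (Set.Iio n).ncard = n := by
    rw [← Finset.coe_range, Set.ncard_coe_finset, Finset.card_range]
  rw [aux_deg_eq_ncard_incidence]
  omega

lemma aux_maxDeg_le_of_coloring [Finite V] [Nonempty V] {G : SimpleGraph V} {n : ℕ}
    {c : Sym2 V → ℕ} (hc : IsProperEdgeColoring G n c) : maxDeg G ≤ n := by
  apply csSup_le
  · exact ⟨deg G (Classical.arbitrary V), Classical.arbitrary V, rfl⟩
  · rintro d ⟨v, rfl⟩; exact aux_deg_le_of_coloring hc v

lemma aux_deg_le_maxDeg [Finite V] (G : SimpleGraph V) (v : V) : deg G v ≤ maxDeg G := by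
  have hbdd : BddAbove {d | ∃ v, deg G v = d} := by
    refine ⟨Nat.card V, ?_⟩
    rintro d ⟨w, rfl⟩
    rw [deg]
    exact le_trans (Set.ncard_le_ncard (Set.subset_univ _) Set.finite_univ)
      (by rw [Set.ncard_univ])
  exact le_csSup hbdd ⟨v, rfl⟩

lemma aux_edge_mem_verts {G : SimpleGraph V} {H : G.Subgraph} {e : Sym2 V} (he : e ∈ H.edgeSet)
    {w : V} (hw : w ∈ e) : w ∈ H.verts := by
  induction e with
  | _ a b =>
    rw [Sym2.mem_iff] at hw
    rw [Subgraph.mem_edgeSet] at he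
    rcases hw with rfl | rfl
    · exact H.edge_vert he
    · exact H.edge_vert he.symm

lemma aux_transfer {G : SimpleGraph V} (H : G.Subgraph) {n : ℕ}
    (h : ∃ c', IsProperEdgeColoring H.coe n c') :
    ∃ c : Sym2 V → ℕ, (∀ e ∈ H.edgeSet, c e < n) ∧
      ∀ e₁ ∈ H.edgeSet, ∀ e₂ ∈ H.edgeSet, e₁ ≠ e₂ → (∃ w, w ∈ e₁ ∧ w ∈ e₂) →
        c e₁ ≠ c e₂ := by
  classical
  obtain ⟨c', hlt, hne⟩ := h
  by_cases hv : H.verts.Nonempty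
  · have hne' : Nonempty ↥H.verts := hv.to_subtype
    set f : V → ↥H.verts := fun x => if h : x ∈ H.verts then ⟨x, h⟩ else Classical.arbitrary _
      with hf
    have hfval : ∀ x (hx : x ∈ H.verts), f x = ⟨x, hx⟩ := fun x hx => by simp [hf, dif_pos hx]
    have hmem : ∀ e ∈ H.edgeSet, e.map f ∈ H.coe.edgeSet := by
      intro e he
      induction e with
      | _ a b =>
        rw [Subgraph.mem_edgeSet] at he
        rw [Sym2.map_pair_eq, mem_edgeSet, hfval a (H.edge_vert he),
          hfval b (H.edge_vert he.symm)]
        exact he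
    have hback : ∀ e ∈ H.edgeSet, (e.map f).map (Subtype.val) = e := by
      intro e he
      induction e with
      | _ a b =>
        rw [Subgraph.mem_edgeSet] at he
        rw [Sym2.map_pair_eq, Sym2.map_pair_eq,
          hfval a (H.edge_vert he), hfval b (H.edge_vert he.symm)]
    refine ⟨fun e => c' (e.map f), ?_, ?_⟩
    · intro e he; exact hlt _ (hmem e he)
    · rintro e₁ h₁ e₂ h₂ hne12 ⟨w, hw₁, hw₂⟩
      apply hne _ (hmem e₁ h₁) _ (hmem e₂ h₂)
      · intro h
        apply hne12
        rw [← hback e₁ h₁, ← hback e₂ h₂, h]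
      · refine ⟨f w, ?_, ?_⟩
        · rw [Sym2.mem_map]; exact ⟨w, hw₁, rfl⟩
        · rw [Sym2.mem_map]; exact ⟨w, hw₂, rfl⟩
  · refine ⟨fun _ => 0, ?_, ?_⟩
    · intro e he
      exact absurd (aux_edge_mem_verts he (Sym2.out_fst_mem e)) (fun h => hv ⟨_, h⟩)
    · intro e he
      exact absurd (aux_edge_mem_verts he (Sym2.out_fst_mem e)) (fun h => hv ⟨_, h⟩)

lemma aux_exists_good_inj (k : ℕ) (s t : Finset ℕ) (hs : s ⊆ Finset.range k)
    (ht : t ⊆ Finset.range k) (hcard : s.card ≤ t.card) :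
    ∃ π : ℕ → ℕ, Function.Injective π ∧ (∀ x, x < k → π x < k) ∧ ∀ x ∈ s, π x ∈ t := by
  classical
  obtain ⟨t', ht't, ht'card⟩ := Finset.exists_subset_card_eq hcard
  have ht' : t' ⊆ Finset.range k := ht't.trans ht
  set u : Finset ℕ := Finset.range k \ s with hu
  set w : Finset ℕ := Finset.range k \ t' with hw
  have hucard : u.card = w.card := by
    rw [hu, hw, Finset.card_sdiff_of_subset hs, Finset.card_sdiff_of_subset ht', ht'card]
  set e₁ : {x // x ∈ s} ≃ {x // x ∈ t'} := Finset.equivOfCardEq ht'card.symm with he₁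
  set e₂ : {x // x ∈ u} ≃ {x // x ∈ w} := Finset.equivOfCardEq hucard with he₂
  set π : ℕ → ℕ := fun x =>
    if h : x ∈ s then (e₁ ⟨x, h⟩ : ℕ) else if h' : x ∈ u then (e₂ ⟨x, h'⟩ : ℕ) else x with hπ
  have h1 : ∀ x (h : x ∈ s), π x = (e₁ ⟨x, h⟩ : ℕ) := fun x h => by simp [hπ, dif_pos h]
  have h2 : ∀ x (h : x ∈ u), π x = (e₂ ⟨x, h⟩ : ℕ) := fun x h => by
    have hxs : x ∉ s := by rw [hu] at h; exact (Finset.mem_sdiff.mp h).2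
    simp [hπ, dif_neg hxs, dif_pos h]
  have h3 : ∀ x, x ∉ s → x ∉ u → π x = x := fun x hx hx' => by simp [hπ, dif_neg hx, dif_neg hx']
  have hmem1 : ∀ x (h : x ∈ s), π x ∈ t' := fun x h => by rw [h1 x h]; exact (e₁ ⟨x, h⟩).2
  have hmem2 : ∀ x (h : x ∈ u), π x ∈ w := fun x h => by rw [h2 x h]; exact (e₂ ⟨x, h⟩).2
  have hout : ∀ x, x ∉ s → x ∉ u → ¬ (x < k) := by
    intro x hx hx' hk
    exact hx' (by rw [hu]; exact Finset.mem_sdiff.mpr ⟨Finset.mem_range.mpr hk, hx⟩)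
  have hdisj : ∀ y, y ∈ t' → y ∈ w → False := by
    intro y hy hy'
    rw [hw] at hy'
    exact (Finset.mem_sdiff.mp hy').2 hy
  have hlt : ∀ x, x < k → π x < k := by
    intro x hk
    by_cases hx : x ∈ s
    · exact Finset.mem_range.mp (ht' (hmem1 x hx))
    · by_cases hx' : x ∈ u
      · have := hmem2 x hx'
        rw [hw, Finset.mem_sdiff] at this
        exact Finset.mem_range.mp this.1
      · exact absurd hk (hout x hx hx')
  have main : ∀ x y, π x = π y → x ∈ s → y ∉ s → False := by
    intro x y hxy hx hy
    have hxt : π x ∈ t' := hmem1 x hx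
    by_cases hy' : y ∈ u
    · have hyw : π y ∈ w := hmem2 y hy'
      rw [← hxy] at hyw
      exact hdisj _ hxt hyw
    · have hyy : π y = y := h3 y hy hy'
      have : π x < k := Finset.mem_range.mp (ht' hxt)
      rw [hxy, hyy] at this
      exact hout y hy hy' this
  refine ⟨π, ?_, hlt, fun x hx => ht't (hmem1 x hx)⟩
  intro x y hxy
  by_cases hx : x ∈ s <;> by_cases hy : y ∈ s
  · have h := (h1 x hx).symm.trans (hxy.trans (h1 y hy))
    have := e₁.injective (Subtype.val_injective h)
    exact congrArg Subtype.val this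
  · exact absurd hxy (fun h => main x y h hx hy)
  · exact absurd hxy.symm (fun h => main y x h hy hx)
  · by_cases hx' : x ∈ u <;> by_cases hy' : y ∈ u
    · have h := (h2 x hx').symm.trans (hxy.trans (h2 y hy'))
      have := e₂.injective (Subtype.val_injective h)
      exact congrArg Subtype.val this
    · have hxw : π x ∈ w := hmem2 x hx'
      have hyy : π y = y := h3 y hy hy'
      have hxk : π x < k := by
        rw [hw, Finset.mem_sdiff] at hxw; exact Finset.mem_range.mp hxw.1
      rw [hxy, hyy] at hxk
      exact absurd hxk (hout y hy hy')
    · have hyw : π y ∈ w := hmem2 y hy'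
      have hxx : π x = x := h3 x hx hx'
      have hyk : π y < k := by
        rw [hw, Finset.mem_sdiff] at hyw; exact Finset.mem_range.mp hyw.1
      rw [← hxy, hxx] at hyk
      exact absurd hyk (hout x hx hx')
    · rw [h3 x hx hx', h3 y hy hy'] at hxy; exact hxy

/-- The key lemma: a critical graph admits no "2-separation" of its edge set. -/
lemma aux_key [Fintype V] (G : SimpleGraph V) (hG : IsCritical G) (v : V)
    (A B : Set V) (hA : A ≠ Set.univ) (hB : B ≠ Set.univ)
    (hmeet : A ∩ B ⊆ {v})
    (hcover : ∀ a b, G.Adj a b → (a ∈ A ∧ b ∈ A) ∨ (a ∈ B ∧ b ∈ B)) : False := by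
  classical
  have hnV : Nonempty V := ⟨v⟩
  have hfinSym : Finite (Sym2 V) := by
    refine Finite.of_surjective (fun p : V × V => s(p.1, p.2)) ?_
    intro z; induction z with | _ a b => exact ⟨(a, b), rfl⟩
  obtain ⟨c₀, hc₀⟩ := aux_ecn_mem G
  have hΔle : maxDeg G ≤ edgeChromaticNumber G := aux_maxDeg_le_of_coloring hc₀
  have hΔlt : maxDeg G < edgeChromaticNumber G := lt_of_le_of_ne hΔle (Ne.symm hG.1)
  set k := edgeChromaticNumber G - 1 with hk
  have hχ : edgeChromaticNumber G = k + 1 := by omega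
  have hΔk : maxDeg G ≤ k := by omega
  -- the two subgraphs
  set HA := (⊤ : G.Subgraph).induce A with hHA
  set HB := (⊤ : G.Subgraph).induce B with hHB
  have hHAne : HA ≠ ⊤ := by
    intro h
    exact hA (by rw [← Subgraph.induce_verts (⊤ : G.Subgraph) A, ← hHA, h, Subgraph.verts_top])
  have hHBne : HB ≠ ⊤ := by
    intro h
    exact hB (by rw [← Subgraph.induce_verts (⊤ : G.Subgraph) B, ← hHB, h, Subgraph.verts_top])
  -- colorings with k colors of the two pieces
  obtain ⟨cA, hcAlt, hcAne⟩ := aux_transfer HA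
    (aux_coloring_of_ecn_le (n := k) (by have := hG.2 HA hHAne; omega))
  obtain ⟨cB, hcBlt, hcBne⟩ := aux_transfer HB
    (aux_coloring_of_ecn_le (n := k) (by have := hG.2 HB hHBne; omega))
  -- edge membership facts
  have hEA : ∀ {e : Sym2 V}, e ∈ HA.edgeSet → ∀ w ∈ e, w ∈ A := by
    intro e he w hw
    have := aux_edge_mem_verts he hw
    rwa [hHA, Subgraph.induce_verts] at this
  have hEB : ∀ {e : Sym2 V}, e ∈ HB.edgeSet → ∀ w ∈ e, w ∈ B := by
    intro e he w hw
    have := aux_edge_mem_verts he hw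
    rwa [hHB, Subgraph.induce_verts] at this
  have hEAsub : HA.edgeSet ⊆ G.edgeSet := by
    intro e he
    induction e with
    | _ a b =>
      rw [Subgraph.mem_edgeSet, hHA, Subgraph.induce_adj] at he
      rw [mem_edgeSet]
      exact he.2.2
  have hEBsub : HB.edgeSet ⊆ G.edgeSet := by
    intro e he
    induction e with
    | _ a b =>
      rw [Subgraph.mem_edgeSet, hHB, Subgraph.induce_adj] at he
      rw [mem_edgeSet]
      exact he.2.2
  have hcoverE : ∀ e ∈ G.edgeSet, e ∈ HA.edgeSet ∨ e ∈ HB.edgeSet := by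
    intro e he
    induction e with
    | _ a b =>
      rw [mem_edgeSet] at he
      rcases hcover a b he with ⟨ha, hb⟩ | ⟨ha, hb⟩
      · left; rw [Subgraph.mem_edgeSet, hHA, Subgraph.induce_adj]; exact ⟨ha, hb, he⟩
      · right; rw [Subgraph.mem_edgeSet, hHB, Subgraph.induce_adj]; exact ⟨ha, hb, he⟩
  -- incidence sets at v
  set IA : Set (Sym2 V) := {e ∈ HA.edgeSet | v ∈ e} with hIA
  set IB : Set (Sym2 V) := {e ∈ HB.edgeSet | v ∈ e} with hIB
  have hIAfin : IA.Finite := Set.toFinite _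
  have hIBfin : IB.Finite := Set.toFinite _
  have hIdisj : Disjoint IA IB := by
    rw [Set.disjoint_left]
    rintro e ⟨heA, hvA⟩ ⟨heB, _⟩
    induction e with
    | _ a b =>
      have ha : a = v := hmeet ⟨hEA heA _ (Sym2.mem_mk_left a b), hEB heB _ (Sym2.mem_mk_left a b)⟩
      have hb : b = v := hmeet ⟨hEA heA _ (Sym2.mem_mk_right a b), hEB heB _ (Sym2.mem_mk_right a b)⟩
      have : G.Adj a b := (G.mem_edgeSet).mp (hEAsub heA)
      exact G.irrefl (ha ▸ hb ▸ this)
  have hIunion : IA ∪ IB ⊆ G.incidenceSet v := by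
    rintro e (⟨he, hv⟩ | ⟨he, hv⟩)
    · exact ⟨hEAsub he, hv⟩
    · exact ⟨hEBsub he, hv⟩
  have hcount : IA.ncard + IB.ncard ≤ k := by
    have h1 : (IA ∪ IB).ncard = IA.ncard + IB.ncard := Set.ncard_union_eq hIdisj hIAfin hIBfin
    have h2 : (IA ∪ IB).ncard ≤ (G.incidenceSet v).ncard :=
      Set.ncard_le_ncard hIunion (Set.toFinite _)
    have h3 : (G.incidenceSet v).ncard = deg G v := (aux_deg_eq_ncard_incidence G v).symm
    have h4 : deg G v ≤ maxDeg G := aux_deg_le_maxDeg G v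
    omega
  -- color sets at v
  set SA : Set ℕ := cA '' IA with hSA
  set SB : Set ℕ := cB '' IB with hSB
  have hSAcard : SA.ncard = IA.ncard := by
    apply Set.ncard_image_of_injOn
    intro x₁ hx₁ x₂ hx₂ h
    by_contra hne
    exact hcAne x₁ hx₁.1 x₂ hx₂.1 hne ⟨v, hx₁.2, hx₂.2⟩ h
  have hSBcard : SB.ncard = IB.ncard := by
    apply Set.ncard_image_of_injOn
    intro x₁ hx₁ x₂ hx₂ h
    by_contra hne
    exact hcBne x₁ hx₁.1 x₂ hx₂.1 hne ⟨v, hx₁.2, hx₂.2⟩ h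
  have hSAfin : SA.Finite := hIAfin.image _
  have hSBfin : SB.Finite := hIBfin.image _
  -- finsets for the injection lemma
  set sF : Finset ℕ := hSBfin.toFinset with hsF
  set tF : Finset ℕ := Finset.range k \ hSAfin.toFinset with htF
  have hsub : hSAfin.toFinset ⊆ Finset.range k := by
    intro x hx
    rw [Set.Finite.mem_toFinset] at hx
    obtain ⟨e, he, rfl⟩ := hx
    exact Finset.mem_range.mpr (hcAlt e he.1)
  have hsFsub : sF ⊆ Finset.range k := by
    intro x hx
    rw [hsF, Set.Finite.mem_toFinset] at hx
    obtain ⟨e, he, rfl⟩ := hx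
    exact Finset.mem_range.mpr (hcBlt e he.1)
  have hcardle : sF.card ≤ tF.card := by
    have hA' : hSAfin.toFinset.card = IA.ncard := by
      rw [← Set.ncard_eq_toFinset_card _ hSAfin]; exact hSAcard
    have hB' : sF.card = IB.ncard := by
      rw [hsF, ← Set.ncard_eq_toFinset_card _ hSBfin]; exact hSBcard
    rw [htF, Finset.card_sdiff_of_subset hsub, Finset.card_range, hA', hB']
    omega
  obtain ⟨π, hπinj, hπlt, hπmem⟩ :=
    aux_exists_good_inj k sF tF hsFsub (Finset.sdiff_subset) hcardle
  -- the combined coloring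
  set c : Sym2 V → ℕ := fun e => if e ∈ HA.edgeSet then cA e else π (cB e) with hc
  have hcB' : ∀ e ∈ G.edgeSet, e ∉ HA.edgeSet → e ∈ HB.edgeSet := by
    intro e he hne
    rcases hcoverE e he with h | h
    · exact absurd h hne
    · exact h
  -- the cross case
  have hcross : ∀ e₁ ∈ G.edgeSet, ∀ e₂ ∈ G.edgeSet, e₁ ∈ HA.edgeSet → e₂ ∉ HA.edgeSet →
      (∃ w, w ∈ e₁ ∧ w ∈ e₂) → c e₁ ≠ c e₂ := by
    rintro e₁ h₁ e₂ h₂ hm₁ hm₂ ⟨w, hw₁, hw₂⟩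
    have hm₂' : e₂ ∈ HB.edgeSet := hcB' e₂ h₂ hm₂
    have hwv : w = v := hmeet ⟨hEA hm₁ _ hw₁, hEB hm₂' _ hw₂⟩
    subst hwv
    have he₁ : e₁ ∈ IA := ⟨hm₁, hw₁⟩
    have he₂ : e₂ ∈ IB := ⟨hm₂', hw₂⟩
    have hc₁ : c e₁ = cA e₁ := by rw [hc]; simp [if_pos hm₁]
    have hc₂ : c e₂ = π (cB e₂) := by rw [hc]; simp [if_neg hm₂]
    rw [hc₁, hc₂]
    intro heq
    have hmem : π (cB e₂) ∈ tF := hπmem _ (by rw [hsF, Set.Finite.mem_toFinset]; exact ⟨e₂, he₂, rfl⟩)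
    rw [htF, Finset.mem_sdiff] at hmem
    apply hmem.2
    rw [Set.Finite.mem_toFinset, ← heq]
    exact ⟨e₁, he₁, rfl⟩
  -- properness of the combined coloring
  have hproper : IsProperEdgeColoring G k c := by
    constructor
    · intro e he
      by_cases hm : e ∈ HA.edgeSet
      · rw [hc]; simp only [if_pos hm]; exact hcAlt e hm
      · rw [hc]; simp only [if_neg hm]
        exact hπlt _ (hcBlt e (hcB' e he hm))
    · intro e₁ h₁ e₂ h₂ hne hshare
      by_cases hm₁ : e₁ ∈ HA.edgeSet <;> by_cases hm₂ : e₂ ∈ HA.edgeSet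
      · have hc₁ : c e₁ = cA e₁ := by rw [hc]; simp [if_pos hm₁]
        have hc₂ : c e₂ = cA e₂ := by rw [hc]; simp [if_pos hm₂]
        rw [hc₁, hc₂]
        exact hcAne e₁ hm₁ e₂ hm₂ hne hshare
      · exact hcross e₁ h₁ e₂ h₂ hm₁ hm₂ hshare
      · exact (hcross e₂ h₂ e₁ h₁ hm₂ hm₁ (by obtain ⟨w, hw₁, hw₂⟩ := hshare; exact ⟨w, hw₂, hw₁⟩)).symm
      · have hc₁ : c e₁ = π (cB e₁) := by rw [hc]; simp [if_neg hm₁]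
        have hc₂ : c e₂ = π (cB e₂) := by rw [hc]; simp [if_neg hm₂]
        rw [hc₁, hc₂]
        intro h
        exact hcBne e₁ (hcB' e₁ h₁ hm₁) e₂ (hcB' e₂ h₂ hm₂) hne hshare (hπinj h)
  have : edgeChromaticNumber G ≤ k := aux_ecn_le ⟨c, hproper⟩
  omega

/-- Every critical graph with at least three vertices is 2-connected. -/
theorem critical_twoConnected [Fintype V] (G : SimpleGraph V)
    (hG : IsCritical G) (hcard : 3 ≤ Fintype.card V) :
    IsTwoConnected G := by
  classical
  have hnV : Nonempty V := Fintype.card_pos_iff.mp (by omega)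
  constructor
  · -- connectedness
    rw [connected_iff]
    refine ⟨?_, hnV⟩
    by_contra hpre
    rw [Preconnected] at hpre
    push_neg at hpre
    obtain ⟨x, y, hxy⟩ := hpre
    set S : Set V := {z | G.Reachable x z} with hS
    refine aux_key G hG x S Sᶜ ?_ ?_ ?_ ?_
    · intro h
      have hy : y ∈ S := by rw [h]; exact Set.mem_univ y
      exact hxy hy
    · intro h
      have : x ∈ Sᶜ := h ▸ Set.mem_univ x
      exact this (Reachable.refl x)
    · rw [Set.inter_compl_self]; exact Set.empty_subset _
    · intro a b hab
      by_cases ha : a ∈ S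
      · exact Or.inl ⟨ha, ha.trans hab.reachable⟩
      · refine Or.inr ⟨ha, ?_⟩
        intro hb
        exact ha (hb.trans hab.symm.reachable)
  · -- 2-connectedness
    intro v
    by_contra hconn
    set H := (⊤ : G.Subgraph).deleteVerts {v} with hH
    have hverts : H.verts = Set.univ \ {v} := by
      rw [hH, Subgraph.deleteVerts_verts, Subgraph.verts_top]
    have hnH : Nonempty ↥H.verts := by
      obtain ⟨w, hw⟩ := Fintype.exists_ne_of_one_lt_card (by omega) v
      exact ⟨⟨w, by rw [hverts]; exact ⟨Set.mem_univ w, hw⟩⟩⟩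
    rw [connected_iff] at hconn
    push_neg at hconn
    have hpre : ¬ H.coe.Preconnected := fun h => (not_isEmpty_iff.mpr hnH) (hconn h)
    rw [Preconnected] at hpre
    push_neg at hpre
    obtain ⟨x, y, hxy⟩ := hpre
    set S : Set V := {z | ∃ h : z ∈ H.verts, H.coe.Reachable x ⟨z, h⟩} with hS
    have hxv : (x : V) ≠ v := ((Set.ext_iff.mp hverts (x : V)).mp x.2).2
    have hyv : (y : V) ≠ v := ((Set.ext_iff.mp hverts (y : V)).mp y.2).2
    have hxS : (x : V) ∈ S := ⟨x.2, Reachable.refl x⟩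
    have hyS : (y : V) ∉ S := by
      rintro ⟨h, hr⟩
      exact hxy hr
    refine aux_key G hG v (S ∪ {v}) ((S ∪ {v})ᶜ ∪ {v}) ?_ ?_ ?_ ?_
    · intro h
      have : (y : V) ∈ S ∪ {v} := h ▸ Set.mem_univ _
      rcases this with h' | h'
      · exact hyS h'
      · exact hyv h'
    · intro h
      have : (x : V) ∈ (S ∪ {v})ᶜ ∪ {v} := h ▸ Set.mem_univ _
      rcases this with h' | h'
      · exact h' (Or.inl hxS)
      · exact hxv h'
    · rintro w ⟨hw₁, hw₂⟩
      rcases hw₂ with h' | h'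
      · exact absurd hw₁ h'
      · exact h'
    · intro a b hab
      by_cases hav : a = v
      · subst hav
        by_cases hbS : b ∈ S
        · exact Or.inl ⟨Or.inr rfl, Or.inl hbS⟩
        · refine Or.inr ⟨Or.inr rfl, Or.inl ?_⟩
          rintro (h' | h')
          · exact hbS h'
          · exact G.irrefl (h' ▸ hab)
      · by_cases hbv : b = v
        · subst hbv
          by_cases haS : a ∈ S
          · exact Or.inl ⟨Or.inl haS, Or.inr rfl⟩
          · refine Or.inr ⟨Or.inl ?_, Or.inr rfl⟩
            rintro (h' | h')
            · exact haS h'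
            · exact hav h'
        · -- both different from v : adjacency descends to H.coe
          have ha' : a ∈ H.verts := by rw [hverts]; exact ⟨Set.mem_univ a, hav⟩
          have hb' : b ∈ H.verts := by rw [hverts]; exact ⟨Set.mem_univ b, hbv⟩
          have hadj : H.coe.Adj ⟨a, ha'⟩ ⟨b, hb'⟩ := by
            rw [Subgraph.coe_adj]
            show ((⊤ : G.Subgraph).deleteVerts {v}).Adj a b
            rw [Subgraph.deleteVerts_adj]
            exact ⟨Set.mem_univ a, fun h => hav h, Set.mem_univ b, fun h => hbv h,
              (Subgraph.top_adj).mpr hab⟩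
          by_cases haS : a ∈ S
          · obtain ⟨h, hr⟩ := haS
            exact Or.inl ⟨Or.inl ⟨h, hr⟩, Or.inl ⟨hb', (hr.trans hadj.reachable : _)⟩⟩
          · have hbS : b ∉ S := by
              rintro ⟨h, hr⟩
              exact haS ⟨ha', hr.trans hadj.symm.reachable⟩
            refine Or.inr ⟨Or.inl ?_, Or.inl ?_⟩
            · rintro (h' | h')
              · exact haS h'
              · exact hav h'
            · rintro (h' | h')
              · exact hbS h'
              · exact hbv h'
end

section
/- (Vizing's Adjacency Lemma) Let G be a critical graph and let xy be an edge of G. Then at least Δ(G) − d_G(y) + 1 vertices in N(x) \ {y} have degree Δ(G), where N(x) is the set of neighbors of x. -/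
open SimpleGraph

variable {V : Type*}

namespace VAL

/-- Proper partial edge coloring of edge set `E` with colors `< k`. -/
def PC (E : Set (Sym2 V)) (k : ℕ) (c : Sym2 V → ℕ) : Prop :=
  (∀ e ∈ E, c e < k) ∧
    ∀ e₁ ∈ E, ∀ e₂ ∈ E, e₁ ≠ e₂ → (∃ v, v ∈ e₁ ∧ v ∈ e₂) → c e₁ ≠ c e₂

/-- color `α` is free (missing) at `v` w.r.t. `c` on `E`. -/
def Fr (E : Set (Sym2 V)) (c : Sym2 V → ℕ) (v : V) (α : ℕ) : Prop :=
  ∀ e ∈ E, v ∈ e → c e ≠ α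

/-- Edge set of `G` minus the edge `xy`. -/
def Exy (G : SimpleGraph V) (x y : V) : Set (Sym2 V) := G.edgeSet \ {s(x,y)}

lemma exists_eq_of_mem_edge {G : SimpleGraph V} {e : Sym2 V} {z : V}
    (he : e ∈ G.edgeSet) (hz : z ∈ e) : ∃ u, G.Adj z u ∧ e = s(z,u) := by
  induction e with
  | _ a b =>
    rw [Sym2.mem_iff] at hz
    rcases hz with rfl | rfl
    · exact ⟨b, he, rfl⟩
    · exact ⟨a, (G.mem_edgeSet.mp he).symm, Sym2.eq_swap⟩

lemma sxy_mem_Exy {G : SimpleGraph V} {x y w : V} (h : G.Adj x w) (hw : w ≠ y) :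
    s(x,w) ∈ Exy G x y := by
  refine ⟨h, fun hmem => ?_⟩
  rw [Set.mem_singleton_iff, Sym2.eq_iff] at hmem
  rcases hmem with ⟨-, rfl⟩ | ⟨-, rfl⟩
  · exact hw rfl
  · exact h.ne' rfl

/-- Vizing multifan chains at `x` w.r.t. removed edge `xy` and coloring `c`.
The list is the chain reversed: head is the newest vertex, last is `y`. -/
inductive Fan (G : SimpleGraph V) (x y : V) (c : Sym2 V → ℕ) : List V → Prop
  | base : Fan G x y c [y]
  | step {u : V} {l : List V} {w : V} : Fan G x y c (u :: l) → G.Adj x w →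
      w ∉ u :: l → w ≠ y → Fr (Exy G x y) c u (c s(x,w)) → Fan G x y c (w :: u :: l)

variable {G : SimpleGraph V} {x y : V} {c : Sym2 V → ℕ}

lemma Fan.mem_adj (hxy : G.Adj x y) {L : List V} (hf : Fan G x y c L) :
    ∀ v ∈ L, G.Adj x v := by
  induction hf with
  | base => intro v hv; simp at hv; subst hv; exact hxy
  | step hf hadj _ _ _ ih =>
    intro v hv
    rcases List.mem_cons.mp hv with rfl | hv
    · exact hadj
    · exact ih v hv

lemma Fan.ne_x (hxy : G.Adj x y) {L : List V} (hf : Fan G x y c L) :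
    ∀ v ∈ L, v ≠ x := fun v hv h => G.irrefl (h ▸ (hf.mem_adj hxy v hv))

lemma Fan.prefix_chain {L : List V} (hf : Fan G x y c L) :
    ∀ v ∈ L, ∃ l, Fan G x y c (v :: l) := by
  induction hf with
  | base => intro v hv; simp at hv; subst hv; exact ⟨[], Fan.base⟩
  | step hf hadj hnm hny hfr ih =>
    intro v hv
    rcases List.mem_cons.mp hv with rfl | hv
    · exact ⟨_, hf.step hadj hnm hny hfr⟩
    · exact ih v hv

/-- If `c'` agrees with `c` on every edge of `E` containing `v`, freeness transfers. -/
lemma Fr.congr {E : Set (Sym2 V)} {c c' : Sym2 V → ℕ} {v : V} {α : ℕ}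
    (h : Fr E c v α) (hag : ∀ e ∈ E, v ∈ e → c' e = c e) : Fr E c' v α :=
  fun e he hv => (hag e he hv) ▸ h e he hv

open Classical in
/-- Updating the color of the edge `x w` for `w` outside the chain preserves the chain. -/
lemma Fan.update (hxy : G.Adj x y) {L : List V} (hf : Fan G x y c L) {w : V} (b : ℕ)
    (hw : w ∉ L) (hwx : w ≠ x) :
    Fan G x y (Function.update c s(x,w) b) L := by
  induction hf with
  | base => exact Fan.base
  | @step u l w' hf hadj hnm hny hfr ih =>
    have hwl : w ∉ u :: l := fun h => hw (List.mem_cons_of_mem _ h)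
    have hne : s(x,w') ≠ s(x,w) := by
      intro h
      rw [Sym2.eq_iff] at h
      rcases h with ⟨-, rfl⟩ | ⟨h1, -⟩
      · exact hw (List.mem_cons_self)
      · exact hwx h1.symm
    have hval : Function.update c s(x,w) b s(x,w') = c s(x,w') :=
      Function.update_of_ne hne b c
    refine Fan.step (ih hwl) hadj hnm hny ?_
    rw [hval]
    refine hfr.congr (fun e he hv => ?_)
    refine Function.update_of_ne (fun h => ?_) b c
    subst h
    rcases Sym2.mem_iff.mp hv with rfl | rfl
    · exact (hf.step hadj hnm hny hfr).ne_x hxy u (by simp) rfl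
    · exact hwl (by simp)

open Classical in
/-- Rotation lemma: if some color is free at both `x` and the tip of a fan chain,
then `G` is fully `k`-colorable. -/
lemma rotate (hxy : G.Adj x y) {k : ℕ} (NoExt : ¬ ∃ ψ, PC G.edgeSet k ψ) :
    ∀ n (l : List V) (c : Sym2 V → ℕ) (z : V), (z :: l).length ≤ n →
      PC (Exy G x y) k c → Fan G x y c (z :: l) →
      ∀ α, α < k → Fr (Exy G x y) c x α → Fr (Exy G x y) c z α → False := by
  intro n
  induction n with
  | zero => intro l c z hlen; simp at hlen
  | succ n ih =>
    intro l c z hlen hc hf α hαk hαx hαz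
    cases hf with
    | base =>
      -- z = y : color the edge xy with α
      apply NoExt
      refine ⟨Function.update c s(x,y) α, ?_, ?_⟩
      · intro e he
        by_cases h : e = s(x,y)
        · subst h; rw [Function.update_self]; exact hαk
        · rw [Function.update_of_ne h]; exact hc.1 e ⟨he, h⟩
      · intro e₁ he₁ e₂ he₂ hne hshare
        obtain ⟨v, hv₁, hv₂⟩ := hshare
        by_cases h₁ : e₁ = s(x,y) <;> by_cases h₂ : e₂ = s(x,y)
        · exact absurd (h₁.trans h₂.symm) hne
        · subst h₁
          rw [Function.update_self, Function.update_of_ne h₂]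
          intro hcon
          rcases Sym2.mem_iff.mp hv₁ with rfl | rfl
          · exact hαx e₂ ⟨he₂, h₂⟩ hv₂ hcon.symm
          · exact hαz e₂ ⟨he₂, h₂⟩ hv₂ hcon.symm
        · subst h₂
          rw [Function.update_self, Function.update_of_ne h₁]
          intro hcon
          rcases Sym2.mem_iff.mp hv₂ with rfl | rfl
          · exact hαx e₁ ⟨he₁, h₁⟩ hv₁ hcon
          · exact hαz e₁ ⟨he₁, h₁⟩ hv₁ hcon
        · rw [Function.update_of_ne h₁, Function.update_of_ne h₂]
          exact hc.2 e₁ ⟨he₁, h₁⟩ e₂ ⟨he₂, h₂⟩ hne ⟨v, hv₁, hv₂⟩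
    | @step u l' _ hfu hadj hnm hny hfr =>
      -- recolor edge x z (z = w) with α, then recurse on u with color γ = c s(x,z)
      set γ := c s(x,z) with hγ
      have hsw : s(x,z) ∈ Exy G x y := sxy_mem_Exy hadj hny
      have hwx : z ≠ x := fun h => G.irrefl (h ▸ hadj)
      have hαγ : γ ≠ α := hαz s(x,z) hsw (by simp) 
      set c' := Function.update c s(x,z) α with hc'
      have hvz : c' s(x,z) = α := by rw [hc', Function.update_self]
      have hvo : ∀ e, e ≠ s(x,z) → c' e = c e := fun e he => by
        rw [hc', Function.update_of_ne he]
      have hagr : ∀ v, v ≠ x → v ≠ z → ∀ e ∈ Exy G x y, v ∈ e → c' e = c e := by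
        intro v hvx hvw e he hv
        refine hvo e (fun h => ?_)
        subst h
        rcases Sym2.mem_iff.mp hv with rfl | rfl
        · exact hvx rfl
        · exact hvw rfl
      -- c' is a proper coloring of Exy
      have hc'p : PC (Exy G x y) k c' := by
        constructor
        · intro e he
          by_cases h : e = s(x,z)
          · subst h; rw [hvz]; exact hαk
          · rw [hvo e h]; exact hc.1 e he
        · intro e₁ he₁ e₂ he₂ hne hshare
          obtain ⟨v, hv₁, hv₂⟩ := hshare
          by_cases h₁ : e₁ = s(x,z) <;> by_cases h₂ : e₂ = s(x,z)
          · exact absurd (h₁.trans h₂.symm) hne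
          · subst h₁
            rw [hvz, hvo e₂ h₂]
            intro hcon
            rcases Sym2.mem_iff.mp hv₁ with rfl | rfl
            · exact hαx e₂ he₂ hv₂ hcon.symm
            · exact hαz e₂ he₂ hv₂ hcon.symm
          · subst h₂
            rw [hvz, hvo e₁ h₁]
            intro hcon
            rcases Sym2.mem_iff.mp hv₂ with rfl | rfl
            · exact hαx e₁ he₁ hv₁ hcon
            · exact hαz e₁ he₁ hv₁ hcon
          · rw [hvo e₁ h₁, hvo e₂ h₂]
            exact hc.2 e₁ he₁ e₂ he₂ hne ⟨v, hv₁, hv₂⟩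
      -- the fan chain to u survives the update
      have hfu' : Fan G x y c' (u :: l') := hfu.update hxy α hnm hwx
      -- γ is free at x for c'
      have hγx : Fr (Exy G x y) c' x γ := by
        intro e he hv
        by_cases h : e = s(x,z)
        · subst h; rw [hvz]; exact fun h' => hαγ h'.symm
        · rw [hvo e h]
          exact hc.2 e he s(x,z) hsw h ⟨x, hv, by simp⟩
      -- γ is free at u for c'
      have hγu : Fr (Exy G x y) c' u γ := by
        have hux : u ≠ x := hfu.ne_x hxy u (by simp)
        have huw : u ≠ z := fun h => hnm (h ▸ List.mem_cons_self)
        exact hfr.congr (fun e he hv => hagr u hux huw e he hv)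
      have hγk : γ < k := hc.1 s(x,z) hsw
      exact ih l' c' u (by simp at hlen ⊢; omega) hc'p hfu' γ hγk hγx hγu

/-- In a graph where every vertex has at most 2 neighbors, and three specified
mutually distinct vertices each have at most 1 neighbor, the three cannot all
be connected with `x` among them. -/
lemma path_endpoint [Fintype V] {H : SimpleGraph V} {x z1 z2 : V}
    (h3 : ∀ a b1 b2 b3, H.Adj a b1 → H.Adj a b2 → H.Adj a b3 →
      b1 = b2 ∨ b1 = b3 ∨ b2 = b3)
    (h1x : ∀ b1 b2, H.Adj x b1 → H.Adj x b2 → b1 = b2)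
    (h1 : ∀ b1 b2, H.Adj z1 b1 → H.Adj z1 b2 → b1 = b2)
    (h2 : ∀ b1 b2, H.Adj z2 b1 → H.Adj z2 b2 → b1 = b2)
    (hz1x : z1 ≠ x) (hz2x : z2 ≠ x) (hz12 : z1 ≠ z2)
    (hr1 : H.Reachable x z1) (hr2 : H.Reachable x z2) : False := by
  classical
  -- a path from x of maximal length
  set S : Set ℕ := {n | ∃ (v : V) (p : H.Walk x v), p.IsPath ∧ p.length = n} with hS
  have hne : (0 : ℕ) ∈ S := ⟨x, Walk.nil, Walk.IsPath.nil, rfl⟩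
  have hbdd : BddAbove S := by
    refine ⟨Fintype.card V, fun n hn => ?_⟩
    obtain ⟨v, p, hp, rfl⟩ := hn
    exact le_of_lt hp.length_lt
  obtain ⟨v, p, hp, hplen⟩ := Nat.sSup_mem ⟨0, hne⟩ hbdd
  have hmax : ∀ m ∈ S, m ≤ p.length := fun m hm => hplen ▸ le_csSup hbdd hm
  have hnodup : p.support.Nodup := hp.support_nodup
  -- one adjacency step stays in the support of p
  have step : ∀ a b, a ∈ p.support → H.Adj a b → b ∈ p.support := by
    intro a b ha hab
    by_cases hb : b ∈ p.support
    · exact hb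
    exfalso
    by_cases hav : a = v
    · subst hav
      have hcp : (p.concat hab).IsPath := by
        refine Walk.IsPath.mk' ?_
        rw [Walk.support_concat]
        rw [List.nodup_append']
        exact ⟨hnodup, List.nodup_singleton _, by simpa using hb⟩
      have : (p.concat hab).length ∈ S := ⟨b, p.concat hab, hcp, rfl⟩
      have := hmax _ this
      rw [Walk.length_concat] at this
      omega
    by_cases hax : a = x
    · subst hax
      have hpnil : ¬ p.Nil := by
        intro hnil
        exact hav hnil.eq
      have hnext : H.Adj a (p.getVert 1) := p.adj_snd hpnil
      have : b = p.getVert 1 := h1x b (p.getVert 1) hab hnext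
      subst this
      apply hb
      rw [← Walk.cons_support_tail hpnil]
      exact List.mem_cons_of_mem _ (Walk.start_mem_support _)
    -- interior vertex
    · have hq := p.take_spec ha
      set q1 := p.takeUntil a ha with hq1def
      set q2 := p.dropUntil a ha with hq2def
      have hq1 : ¬ q1.Nil := Walk.not_nil_of_ne (fun h => hax h.symm)
      have hq2 : ¬ q2.Nil := Walk.not_nil_of_ne hav
      have hq1r : ¬ q1.reverse.Nil := by
        rwa [Walk.nil_iff_length_eq, Walk.length_reverse, ← Walk.nil_iff_length_eq]
      set prev := q1.reverse.getVert 1 with hprevdef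
      have hprev_adj : H.Adj a prev := q1.reverse.adj_snd hq1r
      have hprev_mem : prev ∈ q1.support := by
        have : prev ∈ q1.reverse.support := by
          rw [← Walk.cons_support_tail hq1r]
          exact List.mem_cons_of_mem _ (Walk.start_mem_support _)
        rwa [Walk.support_reverse, List.mem_reverse] at this
      set next := q2.getVert 1 with hnextdef
      have hnext_adj : H.Adj a next := q2.adj_snd hq2
      have hnext_mem : next ∈ q2.support.tail := by
        rw [← Walk.support_tail_of_not_nil _ hq2]
        exact Walk.start_mem_support _
      have happ : p.support = q1.support ++ q2.support.tail := by
        conv_lhs => rw [← hq]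
        exact Walk.support_append _ _
      have hdisj : List.Disjoint q1.support q2.support.tail := by
        have := hnodup
        rw [happ] at this
        exact (List.nodup_append'.mp this).2.2
      have hpn : prev ≠ next := fun h => hdisj hprev_mem (h ▸ hnext_mem)
      rcases h3 a prev next b hprev_adj hnext_adj hab with h | h | h
      · exact hpn h
      · exact hb (by rw [happ]; exact List.mem_append_left _ (h ▸ hprev_mem))
      · exact hb (by rw [happ]; exact List.mem_append_right _ (h ▸ hnext_mem))
  -- everything reachable from x is on p
  have reach_mem : ∀ w, H.Reachable x w → w ∈ p.support := by
    intro w hw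
    obtain ⟨q⟩ := hw
    have main : ∀ n (w : V) (q : H.Walk x w), q.length ≤ n → w ∈ p.support := by
      intro n
      induction n with
      | zero =>
        intro w q hq
        have : q.Nil := Walk.nil_iff_length_eq.mpr (Nat.le_zero.mp hq)
        exact this.eq ▸ Walk.start_mem_support _
      | succ n ih =>
        intro w q hq
        by_cases hnil : q.Nil
        · exact hnil.eq ▸ Walk.start_mem_support _
        · have hqr : ¬ q.reverse.Nil := by
            rwa [Walk.nil_iff_length_eq, Walk.length_reverse, ← Walk.nil_iff_length_eq]
          obtain ⟨u', hadj, q', hq'⟩ := Walk.not_nil_iff.mp hqr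
          have hlen' : q'.reverse.length ≤ n := by
            have h1 : q.reverse.length = q'.length + 1 := by rw [hq']; simp
            rw [Walk.length_reverse] at h1 ⊢
            omega
          exact step u' w (ih u' q'.reverse hlen') hadj.symm
    exact main q.length w q le_rfl
  -- z1 and z2 are both on p and must both equal the far end v
  have endpt : ∀ t, t ∈ p.support → t ≠ x →
      (∀ b1 b2, H.Adj t b1 → H.Adj t b2 → b1 = b2) → t = v := by
    intro t ht htx hdeg1
    by_contra htv
    have hq := p.take_spec ht
    set q1 := p.takeUntil t ht with hq1def
    set q2 := p.dropUntil t ht with hq2def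
    have hq1 : ¬ q1.Nil := Walk.not_nil_of_ne (fun h => htx h.symm)
    have hq2 : ¬ q2.Nil := Walk.not_nil_of_ne htv
    have hq1r : ¬ q1.reverse.Nil := by
      rwa [Walk.nil_iff_length_eq, Walk.length_reverse, ← Walk.nil_iff_length_eq]
    have hprev_adj : H.Adj t (q1.reverse.getVert 1) := q1.reverse.adj_snd hq1r
    have hprev_mem : q1.reverse.getVert 1 ∈ q1.support := by
      have : q1.reverse.getVert 1 ∈ q1.reverse.support := by
        rw [← Walk.cons_support_tail hq1r]
        exact List.mem_cons_of_mem _ (Walk.start_mem_support _)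
      rwa [Walk.support_reverse, List.mem_reverse] at this
    have hnext_adj : H.Adj t (q2.getVert 1) := q2.adj_snd hq2
    have hnext_mem : q2.getVert 1 ∈ q2.support.tail := by
      rw [← Walk.support_tail_of_not_nil _ hq2]
      exact Walk.start_mem_support _
    have happ : p.support = q1.support ++ q2.support.tail := by
      conv_lhs => rw [← hq]
      exact Walk.support_append _ _
    have hdisj : List.Disjoint q1.support q2.support.tail := by
      have := hnodup
      rw [happ] at this
      exact (List.nodup_append'.mp this).2.2
    exact hdisj hprev_mem
      ((hdeg1 _ _ hprev_adj hnext_adj) ▸ hnext_mem)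
  have e1 : z1 = v := endpt z1 (reach_mem z1 hr1) hz1x h1
  have e2 : z2 = v := endpt z2 (reach_mem z2 hr2) hz2x h2
  exact hz12 (e1.trans e2.symm)

section Kempe

variable (G : SimpleGraph V) (x y : V) (c : Sym2 V → ℕ) (α β : ℕ)

/-- Edges colored `α` or `β`. -/
def Dset : Set (Sym2 V) := {e | e ∈ Exy G x y ∧ (c e = α ∨ c e = β)}

/-- The Kempe-chain graph on the `α`/`β`-colored edges. -/
def KG : SimpleGraph V where
  Adj a b := s(a,b) ∈ Dset G x y c α β ∧ a ≠ b
  symm := ⟨fun a b ⟨h, hne⟩ => ⟨by rwa [Sym2.eq_swap], hne.symm⟩⟩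
  loopless := ⟨fun a h => h.2 rfl⟩

open Classical in
/-- Swap `α`/`β` on the Kempe chain through `z0`. -/
noncomputable def swC (z0 : V) : Sym2 V → ℕ := fun e =>
  if e ∈ Dset G x y c α β ∧ (∃ v ∈ e, (KG G x y c α β).Reachable z0 v) then
    (if c e = α then β else α) else c e

variable {G x y c α β} {z0 : V} {k : ℕ}

lemma KG_adj_of_D {e : Sym2 V} (he : e ∈ Dset G x y c α β) {a b : V}
    (hab : e = s(a,b)) : (KG G x y c α β).Adj a b := by
  refine ⟨hab ▸ he, ?_⟩
  intro h
  subst h hab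
  exact G.irrefl (G.mem_edgeSet.mp he.1.1)

lemma reach_all {e : Sym2 V} (he : e ∈ Dset G x y c α β) {v w : V}
    (hv : v ∈ e) (hw : w ∈ e) (hr : (KG G x y c α β).Reachable z0 v) :
    (KG G x y c α β).Reachable z0 w := by
  induction e with
  | _ a b =>
    have hadj := KG_adj_of_D he (rfl)
    rcases Sym2.mem_iff.mp hv with rfl | rfl <;> rcases Sym2.mem_iff.mp hw with rfl | rfl
    · exact hr
    · exact hr.trans hadj.reachable
    · exact hr.trans hadj.symm.reachable
    · exact hr

open Classical in
lemma swC_eq_of_untouched {e : Sym2 V} {v : V} (hv : v ∈ e)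
    (hnr : ¬ (KG G x y c α β).Reachable z0 v) : swC G x y c α β z0 e = c e := by
  rw [swC, if_neg]
  rintro ⟨hD, w, hw, hr⟩
  exact hnr (reach_all hD hw hv hr)

open Classical in
lemma swC_not_D {e : Sym2 V} (he : e ∉ Dset G x y c α β) :
    swC G x y c α β z0 e = c e := by
  rw [swC, if_neg (fun h => he h.1)]

open Classical in
lemma PC_swC (hc : PC (Exy G x y) k c) (hαk : α < k) (hβk : β < k) (hαβ : α ≠ β) :
    PC (Exy G x y) k (swC G x y c α β z0) := by
  constructor
  · intro e he
    rw [swC]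
    split
    · split <;> assumption
    · exact hc.1 e he
  · intro e₁ he₁ e₂ he₂ hne hshare
    obtain ⟨v, hv₁, hv₂⟩ := hshare
    by_cases h₁ : e₁ ∈ Dset G x y c α β ∧ ∃ w ∈ e₁, (KG G x y c α β).Reachable z0 w <;>
      by_cases h₂ : e₂ ∈ Dset G x y c α β ∧ ∃ w ∈ e₂, (KG G x y c α β).Reachable z0 w
    · rw [swC, if_pos h₁, swC, if_pos h₂]
      have hp := hc.2 e₁ he₁ e₂ he₂ hne ⟨v, hv₁, hv₂⟩
      rcases h₁.1.2 with hcc₁ | hcc₁ <;> rcases h₂.1.2 with hcc₂ | hcc₂ <;>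
        simp [hcc₁, hcc₂, hαβ, hαβ.symm] <;> rw [hcc₁, hcc₂] at hp <;> exact hp rfl
    · rw [swC, if_pos h₁, swC, if_neg h₂]
      intro hcon
      -- swC e₁ ∈ {α, β}, so c e₂ ∈ {α, β}, so e₂ ∈ Dset and touched: contradiction
      have hce₂ : c e₂ = α ∨ c e₂ = β := by
        rcases h₁.1.2 with hcc | hcc <;> rw [← hcon] <;> simp [hcc, hαβ] <;> tauto
      have hD₂ : e₂ ∈ Dset G x y c α β := ⟨he₂, hce₂⟩
      obtain ⟨w, hw, hr⟩ := h₁.2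
      exact h₂ ⟨hD₂, v, hv₂, reach_all h₁.1 hw hv₁ hr⟩
    · rw [swC, if_neg h₁, swC, if_pos h₂]
      intro hcon
      have hce₁ : c e₁ = α ∨ c e₁ = β := by
        rcases h₂.1.2 with hcc | hcc <;> rw [hcon] <;> simp [hcc, hαβ] <;> tauto
      have hD₁ : e₁ ∈ Dset G x y c α β := ⟨he₁, hce₁⟩
      obtain ⟨w, hw, hr⟩ := h₂.2
      exact h₁ ⟨hD₁, v, hv₁, reach_all h₂.1 hw hv₂ hr⟩
    · rw [swC, if_neg h₁, swC, if_neg h₂]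
      exact hc.2 e₁ he₁ e₂ he₂ hne ⟨v, hv₁, hv₂⟩

open Classical in
lemma Fr_swC_of_not_reach {v : V} {γ : ℕ}
    (hnr : ¬ (KG G x y c α β).Reachable z0 v) (hfr : Fr (Exy G x y) c v γ) :
    Fr (Exy G x y) (swC G x y c α β z0) v γ := by
  intro e he hv
  rw [swC_eq_of_untouched hv hnr]
  exact hfr e he hv

open Classical in
lemma Fr_swC_beta (hαβ : α ≠ β) {v : V} (hr : (KG G x y c α β).Reachable z0 v)
    (hfr : Fr (Exy G x y) c v α) :
    Fr (Exy G x y) (swC G x y c α β z0) v β := by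
  intro e he hv
  by_cases hD : e ∈ Dset G x y c α β
  · have hcβ : c e = β := (hD.2).resolve_left (hfr e he hv)
    rw [swC, if_pos ⟨hD, v, hv, hr⟩, if_neg (by rw [hcβ]; exact hαβ.symm)]
    exact fun h => hαβ h
  · rw [swC_not_D hD]
    intro h
    exact hD ⟨he, Or.inr h⟩

open Classical in
lemma Fr_swC_other {v : V} {γ : ℕ} (hγα : γ ≠ α) (hγβ : γ ≠ β)
    (hfr : Fr (Exy G x y) c v γ) :
    Fr (Exy G x y) (swC G x y c α β z0) v γ := by
  intro e he hv
  rw [swC]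
  split
  · split
    · exact fun h => hγβ h.symm
    · exact fun h => hγα h.symm
  · exact hfr e he hv

/-- A vertex missing `α` has at most one neighbor in the Kempe graph. -/
lemma KG_deg1 (hc : PC (Exy G x y) k c) {v : V} (hfr : Fr (Exy G x y) c v α) :
    ∀ b1 b2, (KG G x y c α β).Adj v b1 → (KG G x y c α β).Adj v b2 → b1 = b2 := by
  intro b1 b2 h1 h2
  have hco1 : c s(v,b1) = β := (h1.1.2).resolve_left (hfr _ h1.1.1 (by simp))
  have hco2 : c s(v,b2) = β := (h2.1.2).resolve_left (hfr _ h2.1.1 (by simp))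
  by_contra hne
  have hed : s(v,b1) ≠ s(v,b2) := by
    intro h
    rw [Sym2.eq_iff] at h
    rcases h with ⟨-, h⟩ | ⟨h', h''⟩
    · exact hne h
    · exact hne (h''.trans h')
  exact hc.2 _ h1.1.1 _ h2.1.1 hed ⟨v, by simp, by simp⟩ (hco1.trans hco2.symm)

/-- A vertex missing `β` has at most one neighbor in the Kempe graph. -/
lemma KG_deg1' (hc : PC (Exy G x y) k c) {v : V} (hfr : Fr (Exy G x y) c v β) :
    ∀ b1 b2, (KG G x y c α β).Adj v b1 → (KG G x y c α β).Adj v b2 → b1 = b2 := by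
  intro b1 b2 h1 h2
  have hco1 : c s(v,b1) = α := (h1.1.2).resolve_right (hfr _ h1.1.1 (by simp))
  have hco2 : c s(v,b2) = α := (h2.1.2).resolve_right (hfr _ h2.1.1 (by simp))
  by_contra hne
  have hed : s(v,b1) ≠ s(v,b2) := by
    intro h
    rw [Sym2.eq_iff] at h
    rcases h with ⟨-, h⟩ | ⟨h', h''⟩
    · exact hne h
    · exact hne (h''.trans h')
  exact hc.2 _ h1.1.1 _ h2.1.1 hed ⟨v, by simp, by simp⟩ (hco1.trans hco2.symm)

/-- Every vertex has at most two neighbors in the Kempe graph. -/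
lemma KG_deg2 (hc : PC (Exy G x y) k c) :
    ∀ a b1 b2 b3, (KG G x y c α β).Adj a b1 → (KG G x y c α β).Adj a b2 →
      (KG G x y c α β).Adj a b3 → b1 = b2 ∨ b1 = b3 ∨ b2 = b3 := by
  intro a b1 b2 b3 h1 h2 h3
  have key : ∀ b b' , (KG G x y c α β).Adj a b → (KG G x y c α β).Adj a b' →
      c s(a,b) = c s(a,b') → b = b' := by
    intro b b' hb hb' hcc
    by_contra hne
    have hed : s(a,b) ≠ s(a,b') := by
      intro h
      rw [Sym2.eq_iff] at h
      rcases h with ⟨-, h⟩ | ⟨h', h''⟩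
      · exact hne h
      · exact hne (h''.trans h')
    exact hc.2 _ hb.1.1 _ hb'.1.1 hed ⟨a, by simp, by simp⟩ hcc
  by_cases h12 : c s(a,b1) = c s(a,b2)
  · exact Or.inl (key _ _ h1 h2 h12)
  by_cases h13 : c s(a,b1) = c s(a,b3)
  · exact Or.inr (Or.inl (key _ _ h1 h3 h13))
  · refine Or.inr (Or.inr (key _ _ h2 h3 ?_))
    rcases h1.1.2 with hc1 | hc1 <;> rcases h2.1.2 with hc2 | hc2 <;>
      rcases h3.1.2 with hc3 | hc3 <;> rw [hc2, hc3] <;>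
        first
          | rfl
          | (exact absurd (hc1.trans hc2.symm) h12)
          | (exact absurd (hc1.trans hc3.symm) h13)

end Kempe

open Classical in
/-- Key lemma: no color can be free at two distinct fan vertices. -/
lemma no_two_free [Fintype V] {G : SimpleGraph V} {x y : V} (hxy : G.Adj x y) {k : ℕ}
    (NoExt : ¬ ∃ ψ, PC G.edgeSet k ψ)
    {c : Sym2 V → ℕ} (hc : PC (Exy G x y) k c)
    {z1 z2 : V} {l1 l2 : List V}
    (hf1 : Fan G x y c (z1 :: l1)) (hf2 : Fan G x y c (z2 :: l2))
    (hz12 : z1 ≠ z2) {α : ℕ} (hαk : α < k)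
    (hfr1 : Fr (Exy G x y) c z1 α) (hfr2 : Fr (Exy G x y) c z2 α)
    {β : ℕ} (hβk : β < k) (hβx : Fr (Exy G x y) c x β) : False := by
  have hαβ : α ≠ β := fun h =>
    rotate hxy NoExt (z1 :: l1).length l1 c z1 le_rfl hc hf1 α hαk (h ▸ hβx) hfr1
  have hz1x : z1 ≠ x := hf1.ne_x hxy z1 (List.mem_cons_self)
  have hz2x : z2 ≠ x := hf2.ne_x hxy z2 (List.mem_cons_self)
  -- one of z1, z2 is not in the Kempe chain of x
  have hnr : ¬ (KG G x y c α β).Reachable x z1 ∨ ¬ (KG G x y c α β).Reachable x z2 := by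
    by_contra h
    push_neg at h
    exact path_endpoint (KG_deg2 hc) (KG_deg1' hc hβx) (KG_deg1 hc hfr1)
      (KG_deg1 hc hfr2) hz1x hz2x hz12 h.1 h.2
  -- take a chain of minimal length ending at an α-free vertex outside x's chain
  set N : Set ℕ := {n | ∃ (z : V) (l : List V), Fan G x y c (z :: l) ∧
    Fr (Exy G x y) c z α ∧ ¬ (KG G x y c α β).Reachable x z ∧ (z :: l).length = n}
    with hN
  have hNne : N.Nonempty := by
    rcases hnr with h | h
    · exact ⟨_, z1, l1, hf1, hfr1, h, rfl⟩
    · exact ⟨_, z2, l2, hf2, hfr2, h, rfl⟩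
  obtain ⟨zs, ls, hfz, hfrz, hnrz, hlen⟩ := Nat.sInf_mem hNne
  set n0 := sInf N with hn0
  have hxr : ¬ (KG G x y c α β).Reachable zs x := fun h => hnrz h.symm
  set ψ := swC G x y c α β zs with hψ
  have hcψ : PC (Exy G x y) k ψ := PC_swC hc hαk hβk hαβ
  have hβx' : Fr (Exy G x y) ψ x β := Fr_swC_of_not_reach hxr hβx
  have hβz' : Fr (Exy G x y) ψ zs β := Fr_swC_beta hαβ (Reachable.refl zs) hfrz
  have hfanψ : ∀ L, Fan G x y c L → L.length ≤ n0 → Fan G x y ψ L := by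
    intro L hf
    induction hf with
    | base => exact fun _ => Fan.base
    | @step u l w hfu hadj hnm hny hfr ih =>
      intro hlen'
      have hlu : (u :: l).length ≤ n0 := by simp at hlen' ⊢; omega
      refine (ih hlu).step hadj hnm hny ?_
      have hxw : s(x,w) ∈ Exy G x y := sxy_mem_Exy hadj hny
      have hψxw : ψ s(x,w) = c s(x,w) := swC_eq_of_untouched (by simp) hxr
      rw [hψxw]
      by_cases hγα : c s(x,w) = α
      · by_cases hru : (KG G x y c α β).Reachable zs u
        · exfalso
          have hnru : ¬ (KG G x y c α β).Reachable x u := fun h => hnrz (h.trans hru.symm)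
          have hmem : (u :: l).length ∈ N := ⟨u, l, hfu, hγα ▸ hfr, hnru, rfl⟩
          have h1 := Nat.sInf_le hmem
          simp only [List.length_cons] at hlen' h1
          omega
        · exact Fr_swC_of_not_reach hru hfr
      · by_cases hγβ : c s(x,w) = β
        · exact absurd hγβ (hβx s(x,w) hxw (by simp))
        · exact Fr_swC_other hγα hγβ hfr
  exact rotate hxy NoExt (zs :: ls).length ls ψ zs le_rfl hcψ
    (hfanψ _ hfz (le_of_eq hlen)) β hβk hβx' hβz'

section Counting

variable [Fintype V] {G : SimpleGraph V} {x y : V} {c : Sym2 V → ℕ} {k : ℕ}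

open Classical

/-- The set of fan vertices. -/
def Zset (G : SimpleGraph V) (x y : V) (c : Sym2 V → ℕ) : Set V :=
  {z | ∃ l, Fan G x y c (z :: l)}

lemma Zset_adj (hxy : G.Adj x y) {z : V} (hz : z ∈ Zset G x y c) : G.Adj x z := by
  obtain ⟨l, hl⟩ := hz
  exact hl.mem_adj hxy z (List.mem_cons_self)

lemma y_mem_Zset : y ∈ Zset G x y c := ⟨[], Fan.base⟩

/-- Maximality of the fan: a color free at a fan vertex appears on a fan edge. -/
lemma F3 (hxy : G.Adj x y) (NoExt : ¬ ∃ ψ, PC G.edgeSet k ψ)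
    (hc : PC (Exy G x y) k c) {z : V} {α : ℕ} (hz : z ∈ Zset G x y c)
    (hαk : α < k) (hfr : Fr (Exy G x y) c z α) :
    ∃ w, w ∈ Zset G x y c ∧ w ≠ y ∧ G.Adj x w ∧ c s(x,w) = α := by
  obtain ⟨l, hl⟩ := hz
  have hnx : ¬ Fr (Exy G x y) c x α := fun h =>
    rotate hxy NoExt (z :: l).length l c z le_rfl hc hl α hαk h hfr
  rw [Fr] at hnx
  push_neg at hnx
  obtain ⟨e, he, hxe, hce⟩ := hnx
  obtain ⟨w, hadj, rfl⟩ := exists_eq_of_mem_edge he.1 hxe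
  have hwy : w ≠ y := by
    intro h
    subst h
    exact he.2 rfl
  refine ⟨w, ?_, hwy, hadj, hce⟩
  by_cases hw : w ∈ z :: l
  · exact hl.prefix_chain w hw
  · exact ⟨_, hl.step hadj hw hwy (hce ▸ hfr)⟩

variable (G x y c k)

/-- Neighbors of `v` along edges of `Exy`. -/
noncomputable def nbrF (v : V) : Finset V :=
  Finset.univ.filter (fun u => G.Adj v u ∧ s(v,u) ≠ s(x,y))

/-- Colors in `[0,k)` used at `v`. -/
noncomputable def usedF (v : V) : Finset ℕ := (nbrF G x y v).image (fun u => c s(v,u))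

/-- Colors in `[0,k)` free at `v`. -/
noncomputable def freeF (v : V) : Finset ℕ :=
  (Finset.range k).filter (fun a => Fr (Exy G x y) c v a)

/-- The fan vertex set as a Finset. -/
noncomputable def Zf : Finset V := Set.toFinset (Zset G x y c)

variable {G x y c k}

lemma mem_freeF {v : V} {a : ℕ} :
    a ∈ freeF G x y c k v ↔ a < k ∧ Fr (Exy G x y) c v a := by
  simp [freeF]

lemma mem_Zf {z : V} : z ∈ Zf G x y c ↔ z ∈ Zset G x y c := by simp [Zf]

lemma not_mem_usedF_free {v : V} {a : ℕ} (h : a ∉ usedF G x y c v) :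
    Fr (Exy G x y) c v a := by
  intro e he hv hce
  obtain ⟨u, hadj, rfl⟩ := exists_eq_of_mem_edge he.1 hv
  refine h ?_
  rw [usedF, Finset.mem_image]
  refine ⟨u, ?_, hce⟩
  rw [nbrF, Finset.mem_filter]
  exact ⟨Finset.mem_univ _, hadj, fun hh => he.2 hh⟩

lemma key1 (v : V) : k ≤ (freeF G x y c k v).card + (usedF G x y c v).card := by
  have hsub : Finset.range k ⊆ freeF G x y c k v ∪ usedF G x y c v := by
    intro a ha
    rw [Finset.mem_union]
    by_cases h : a ∈ usedF G x y c v
    · exact Or.inr h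
    · exact Or.inl (mem_freeF.mpr ⟨Finset.mem_range.mp ha, not_mem_usedF_free h⟩)
  calc k = (Finset.range k).card := (Finset.card_range k).symm
    _ ≤ (freeF G x y c k v ∪ usedF G x y c v).card := Finset.card_le_card hsub
    _ ≤ _ := Finset.card_union_le _ _

lemma key2 (v : V) : (usedF G x y c v).card ≤ (nbrF G x y v).card :=
  Finset.card_image_le

lemma deg_eq (v : V) : deg G v = (Finset.univ.filter (fun u => G.Adj v u)).card := by
  rw [deg, Set.ncard_eq_toFinset_card']
  congr 1
  ext u
  simp [neighborSet]
  exact Set.mem_toFinset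

lemma nbrF_y (hxy : G.Adj x y) :
    (nbrF G x y y).card + 1 = deg G y := by
  have hyx : y ≠ x := fun h => G.irrefl (h ▸ hxy)
  have : nbrF G x y y = (Finset.univ.filter (fun u => G.Adj y u)).erase x := by
    ext u
    simp only [nbrF, Finset.mem_filter, Finset.mem_univ, true_and, Finset.mem_erase]
    constructor
    · rintro ⟨hadj, hne⟩
      refine ⟨fun h => hne ?_, hadj⟩
      subst h
      exact Sym2.eq_swap
    · rintro ⟨hne, hadj⟩
      refine ⟨hadj, fun h => ?_⟩
      rw [Sym2.eq_iff] at h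
      rcases h with ⟨h1, -⟩ | ⟨-, h2⟩
      · exact hyx h1
      · exact hne h2
  rw [this, deg_eq, Finset.card_erase_of_mem]
  · have : x ∈ Finset.univ.filter (fun u => G.Adj y u) := by simp [hxy.symm]
    have hpos : 0 < (Finset.univ.filter (fun u => G.Adj y u)).card :=
      Finset.card_pos.mpr ⟨x, this⟩
    omega
  · simp [hxy.symm]

lemma nbrF_other {z : V} (hzx : z ≠ x) (hzy : z ≠ y) :
    (nbrF G x y z).card = deg G z := by
  rw [deg_eq]
  congr 1
  ext u
  simp only [nbrF, Finset.mem_filter, Finset.mem_univ, true_and, and_iff_left_iff_imp]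
  intro _ h
  rw [Sym2.eq_iff] at h
  rcases h with ⟨h1, -⟩ | ⟨h1, -⟩
  · exact hzx h1
  · exact hzy h1

end Counting


open Classical

variable [Fintype V] {G : SimpleGraph V} {x y : V} {c : Sym2 V → ℕ} {k : ℕ}

lemma nbrF_x (hxy : G.Adj x y) :
    (nbrF G x y x).card + 1 = deg G x := by
  have hxyne : x ≠ y := hxy.ne
  have : nbrF G x y x = (Finset.univ.filter (fun u => G.Adj x u)).erase y := by
    ext u
    simp only [nbrF, Finset.mem_filter, Finset.mem_univ, true_and, Finset.mem_erase]
    constructor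
    · rintro ⟨hadj, hne⟩
      exact ⟨fun h => hne (by rw [h]), hadj⟩
    · rintro ⟨hne, hadj⟩
      refine ⟨hadj, fun h => ?_⟩
      rw [Sym2.eq_iff] at h
      rcases h with ⟨-, h2⟩ | ⟨h1, -⟩
      · exact hne h2
      · exact hxyne h1
  rw [this, deg_eq, Finset.card_erase_of_mem]
  · have : y ∈ Finset.univ.filter (fun u => G.Adj x u) := by simp [hxy]
    have hpos : 0 < (Finset.univ.filter (fun u => G.Adj x u)).card :=
      Finset.card_pos.mpr ⟨y, this⟩
    omega
  · simp [hxy]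

/-- The master counting argument. -/
lemma master (hxy : G.Adj x y) (NoExt : ¬ ∃ ψ, PC G.edgeSet k ψ)
    (hc : PC (Exy G x y) k c) (hkΔ : maxDeg G ≤ k)
    (hdegle : ∀ v, deg G v ≤ maxDeg G) :
    maxDeg G + 1 ≤
      (((Zf G x y c).erase y).filter (fun z => deg G z = maxDeg G)).card + deg G y := by
  set Δ := maxDeg G with hΔ
  -- a free color at x
  have hdx : 1 ≤ deg G x := by
    rw [deg_eq]
    exact Finset.card_pos.mpr ⟨y, by simp [hxy]⟩
  have hβex : ∃ β, β < k ∧ Fr (Exy G x y) c x β := by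
    have h1 := key1 (G := G) (x := x) (y := y) (c := c) (k := k) x
    have h2 := key2 (G := G) (x := x) (y := y) (c := c) x
    have h3 := nbrF_x hxy
    have h4 : deg G x ≤ k := le_trans (hdegle x) hkΔ
    have h5 : 0 < (freeF G x y c k x).card := by omega
    obtain ⟨β, hβ⟩ := Finset.card_pos.mp h5
    rw [mem_freeF] at hβ
    exact ⟨β, hβ⟩
  obtain ⟨β, hβk, hβx⟩ := hβex
  -- pairwise disjointness of free color sets over fan vertices
  have hdisj : ∀ z1 ∈ Zf G x y c, ∀ z2 ∈ Zf G x y c, z1 ≠ z2 →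
      Disjoint (freeF G x y c k z1) (freeF G x y c k z2) := by
    intro z1 hz1 z2 hz2 hne
    rw [Finset.disjoint_left]
    intro a ha1 ha2
    rw [mem_freeF] at ha1 ha2
    obtain ⟨l1, hl1⟩ := mem_Zf.mp hz1
    obtain ⟨l2, hl2⟩ := mem_Zf.mp hz2
    exact no_two_free hxy NoExt hc hl1 hl2 hne ha1.1 ha1.2 ha2.2 hβk hβx
  -- the free colors inject into the non-root fan vertices
  set B : Finset ℕ := (Zf G x y c).biUnion (freeF G x y c k) with hB
  have hSf : ∑ z ∈ Zf G x y c, (freeF G x y c k z).card = B.card :=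
    (Finset.card_biUnion hdisj).symm
  have hwit : ∀ a ∈ B, ∃ w, w ∈ Zset G x y c ∧ w ≠ y ∧ G.Adj x w ∧ c s(x,w) = a := by
    intro a ha
    obtain ⟨z, hz, haz⟩ := Finset.mem_biUnion.mp ha
    rw [mem_freeF] at haz
    exact F3 hxy NoExt hc (mem_Zf.mp hz) haz.1 haz.2
  set f : ℕ → V := fun a =>
    if h : ∃ w, w ∈ Zset G x y c ∧ w ≠ y ∧ G.Adj x w ∧ c s(x,w) = a then h.choose else x
    with hf
  have hfspec : ∀ a ∈ B, f a ∈ Zset G x y c ∧ f a ≠ y ∧ c s(x, f a) = a := by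
    intro a ha
    have h := hwit a ha
    rw [hf]
    simp only [dif_pos h]
    exact ⟨h.choose_spec.1, h.choose_spec.2.1, h.choose_spec.2.2.2⟩
  have hBcard : B.card ≤ ((Zf G x y c).erase y).card := by
    refine Finset.card_le_card_of_injOn f (fun a ha => ?_) ?_
    · obtain ⟨h1, h2, h3⟩ := hfspec a ha
      exact Finset.mem_erase.mpr ⟨h2, mem_Zf.mpr h1⟩
    · intro a1 ha1 a2 ha2 heq
      have s1 := (hfspec a1 ha1).2.2
      have s2 := (hfspec a2 ha2).2.2
      rw [← s1, ← s2, heq]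
  -- global sum bound
  have hyZ : y ∈ Zf G x y c := mem_Zf.mpr y_mem_Zset
  have hsum1 : k * (Zf G x y c).card ≤
      ∑ z ∈ Zf G x y c, ((freeF G x y c k z).card + (nbrF G x y z).card) := by
    calc k * (Zf G x y c).card = ∑ _z ∈ Zf G x y c, k := by
          rw [Finset.sum_const, smul_eq_mul, mul_comm]
      _ ≤ ∑ z ∈ Zf G x y c, ((freeF G x y c k z).card + (usedF G x y c z).card) :=
          Finset.sum_le_sum (fun z _ => key1 (G:=G) (x:=x) (y:=y) (c:=c) (k:=k) z)
      _ ≤ _ := Finset.sum_le_sum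
          (fun z _ => Nat.add_le_add_left (key2 (G:=G) (x:=x) (y:=y) (c:=c) z) _)
  rw [Finset.sum_add_distrib] at hsum1
  -- split the neighbor sum
  have hsplit : (nbrF G x y y).card + ∑ z ∈ (Zf G x y c).erase y, (nbrF G x y z).card =
      ∑ z ∈ Zf G x y c, (nbrF G x y z).card :=
    Finset.add_sum_erase _ (fun z => (nbrF G x y z).card) hyZ
  set T := (Zf G x y c).erase y with hT
  set T1 := T.filter (fun z => deg G z = Δ) with hT1
  set T2 := T.filter (fun z => ¬ deg G z = Δ) with hT2
  have hpart : T1.card + T2.card = T.card :=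
    Finset.card_filter_add_card_filter_not _
  have hTz : ∀ z ∈ T, (nbrF G x y z).card = deg G z := by
    intro z hz
    have hzy : z ≠ y := (Finset.mem_erase.mp hz).1
    have hzZ : z ∈ Zset G x y c := mem_Zf.mp (Finset.mem_erase.mp hz).2
    have hzx : z ≠ x := fun h => G.irrefl (h ▸ Zset_adj hxy hzZ)
    exact nbrF_other hzx hzy
  have hsum2 : ∑ z ∈ T, (nbrF G x y z).card + T2.card ≤ (T1.card + T2.card) * Δ := by
    rw [← Finset.sum_filter_add_sum_filter_not T (fun z => deg G z = Δ), ← hT1, ← hT2]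
    have b1 : ∑ z ∈ T1, (nbrF G x y z).card ≤ T1.card * Δ := by
      refine Finset.sum_le_card_nsmul _ _ _ (fun z hz => ?_)
      rw [hT1, Finset.mem_filter] at hz
      rw [hTz z hz.1, hz.2]
    have b2 : ∑ z ∈ T2, (nbrF G x y z).card + T2.card ≤ T2.card * Δ := by
      have : ∑ z ∈ T2, ((nbrF G x y z).card + 1) ≤ T2.card * Δ := by
        refine Finset.sum_le_card_nsmul _ _ _ (fun z hz => ?_)
        rw [hT2, Finset.mem_filter] at hz
        rw [hTz z hz.1]
        have := hdegle z
        omega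
      rwa [Finset.sum_add_distrib, Finset.sum_const, smul_eq_mul, mul_one] at this
    rw [add_mul]
    omega
  -- put everything together
  have hny : (nbrF G x y y).card + 1 = deg G y := nbrF_y hxy
  have hdy : deg G y ≤ Δ := hdegle y
  have hdy1 : 1 ≤ deg G y := by
    rw [deg_eq]
    exact Finset.card_pos.mpr ⟨x, by simp [hxy.symm]⟩
  have hcZ : (Zf G x y c).card = T.card + 1 := by
    rw [hT, Finset.card_erase_of_mem hyZ]
    have : 0 < (Zf G x y c).card := Finset.card_pos.mpr ⟨y, hyZ⟩
    omega
  have hgoal : Δ + 1 ≤ T1.card + deg G y := by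
    have e1 : k * (Zf G x y c).card = k * (T1.card + T2.card) + k := by
      rw [hcZ, hpart]; ring
    rw [e1] at hsum1
    rw [← hpart] at hBcard
    rw [hSf] at hsum1
    rw [mul_comm] at hsum2
    have hprod2 : Δ * (T1.card + T2.card) ≤ k * (T1.card + T2.card) :=
      Nat.mul_le_mul_right _ hkΔ
    generalize hPd : Δ * (T1.card + T2.card) = P at hprod2 hsum2
    generalize hQd : k * (T1.card + T2.card) = Q at hprod2 hsum1
    omega
  calc Δ + 1 ≤ T1.card + deg G y := hgoal
    _ = _ := by rw [hT1, hT]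

section Outer

open Classical

variable {W : Type*}

/-- Every finite graph has some proper edge coloring. -/
lemma exists_PC [Fintype W] (H : SimpleGraph W) :
    ∃ n cc, IsProperEdgeColoring H n cc := by
  classical
  set l := H.edgeFinset.toList with hl
  refine ⟨l.length, fun e => l.idxOf e, ?_, ?_⟩
  · intro e he
    rw [List.idxOf_lt_length_iff]
    rw [hl, Finset.mem_toList, mem_edgeFinset]
    exact he
  · intro e₁ he₁ e₂ he₂ hne _
    have h₁ : e₁ ∈ l := by rw [hl, Finset.mem_toList, mem_edgeFinset]; exact he₁
    have h₂ : e₂ ∈ l := by rw [hl, Finset.mem_toList, mem_edgeFinset]; exact he₂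
    intro h
    exact hne ((List.idxOf_inj h₁).mp h)

/-- There is a proper coloring with `edgeChromaticNumber` colors. -/
lemma chrom_spec [Fintype W] (H : SimpleGraph W) :
    ∃ cc, IsProperEdgeColoring H (edgeChromaticNumber H) cc := by
  obtain ⟨n, cc, hcc⟩ := exists_PC H
  exact Nat.sInf_mem (⟨n, cc, hcc⟩ : {n | ∃ c, IsProperEdgeColoring H n c}.Nonempty)

lemma chrom_no_coloring_lt [Fintype W] (H : SimpleGraph W) {m : ℕ}
    (hm : m < edgeChromaticNumber H) : ¬ ∃ cc, IsProperEdgeColoring H m cc :=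
  fun h => absurd (Nat.sInf_le h) (not_le.mpr hm)

lemma PC_mono {E : Set (Sym2 W)} {m n : ℕ} {cc : Sym2 W → ℕ} (hmn : m ≤ n)
    (h : PC E m cc) : PC E n cc :=
  ⟨fun e he => lt_of_lt_of_le (h.1 e he) hmn, h.2⟩

variable [Fintype V] {G : SimpleGraph V}

lemma deg_le_maxDeg (v : V) : deg G v ≤ maxDeg G := by
  refine le_csSup ?_ ⟨v, rfl⟩
  have : {d | ∃ v, deg G v = d} = Set.range (deg G) := rfl
  rw [this]
  exact (Set.finite_range _).bddAbove

lemma exists_maxDeg (hne : Nonempty V) : ∃ v, deg G v = maxDeg G := by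
  have h1 : {d | ∃ v, deg G v = d}.Nonempty := ⟨deg G hne.some, hne.some, rfl⟩
  have h2 : BddAbove {d | ∃ v, deg G v = d} := by
    have : {d | ∃ v, deg G v = d} = Set.range (deg G) := rfl
    rw [this]
    exact (Set.finite_range _).bddAbove
  exact Nat.sSup_mem h1 h2

/-- Any proper coloring needs at least `deg v` colors. -/
lemma deg_le_colors {n : ℕ} {cc : Sym2 V → ℕ}
    (hcc : IsProperEdgeColoring G n cc) (v : V) : deg G v ≤ n := by
  rw [deg_eq]
  have : (Finset.univ.filter (fun u => G.Adj v u)).card ≤ (Finset.range n).card := by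
    refine Finset.card_le_card_of_injOn (fun u => cc s(v,u)) ?_ ?_
    · intro u hu
      rw [Finset.mem_coe, Finset.mem_filter] at hu
      rw [Finset.mem_coe, Finset.mem_range]
      exact hcc.1 _ hu.2
    · intro u₁ hu₁ u₂ hu₂ heq
      simp only [Finset.coe_filter, Set.mem_setOf_eq, Finset.mem_univ, true_and] at hu₁ hu₂
      by_contra hne
      have hed : s(v,u₁) ≠ s(v,u₂) := by
        intro h
        rw [Sym2.eq_iff] at h
        rcases h with ⟨-, h⟩ | ⟨h', h''⟩
        · exact hne h
        · exact hne (h''.trans h')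
      exact hcc.2 _ hu₁ _ hu₂ hed ⟨v, by simp, by simp⟩ heq
  rwa [Finset.card_range] at this

lemma maxDeg_le_colors {n : ℕ} {cc : Sym2 V → ℕ} (hne : Nonempty V)
    (hcc : IsProperEdgeColoring G n cc) : maxDeg G ≤ n := by
  obtain ⟨v, hv⟩ := exists_maxDeg (G := G) hne
  exact hv ▸ deg_le_colors hcc v

end Outer

end VAL

open VAL in
/-- Vizing's Adjacency Lemma: if `G` is critical and `xy ∈ E(G)`, then at
least `Δ(G) − d_G(y) + 1` vertices in `N(x) \ {y}` have degree `Δ(G)`. -/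
theorem vizing_adjacency_lemma [Fintype V] (G : SimpleGraph V)
    (hG : IsCritical G) {x y : V} (hxy : G.Adj x y) :
    maxDeg G - deg G y + 1 ≤
      {z | z ∈ G.neighborSet x ∧ z ≠ y ∧ deg G z = maxDeg G}.ncard := by
  classical
  obtain ⟨c0, hc0⟩ := chrom_spec G
  have hΔn : maxDeg G ≤ edgeChromaticNumber G := maxDeg_le_colors ⟨x⟩ hc0
  have hn : maxDeg G + 1 ≤ edgeChromaticNumber G :=
    Nat.lt_of_le_of_ne hΔn (fun h => hG.1 h.symm)
  set k := edgeChromaticNumber G - 1 with hkdef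
  have hk1 : k + 1 = edgeChromaticNumber G := by omega
  have hkΔ : maxDeg G ≤ k := by omega
  have NoExt : ¬ ∃ ψ, PC G.edgeSet k ψ := by
    rintro ⟨ψ, hψ⟩
    exact chrom_no_coloring_lt G (show k < edgeChromaticNumber G by omega) ⟨ψ, hψ⟩
  -- the subgraph with the edge xy removed
  set Hs : G.Subgraph :=
    { verts := Set.univ
      Adj := fun a b => G.Adj a b ∧ s(a,b) ≠ s(x,y)
      adj_sub := fun h => h.1
      edge_vert := fun _ => Set.mem_univ _
      symm := ⟨fun a b ⟨h, hne⟩ => ⟨h.symm, by rwa [Sym2.eq_swap]⟩⟩ } with hHs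
  have hHsne : Hs ≠ ⊤ := by
    intro h
    have h2 : Hs.Adj x y ↔ (⊤ : G.Subgraph).Adj x y := by rw [h]
    rw [Subgraph.top_adj] at h2
    exact (h2.mpr hxy).2 rfl
  have hlt := hG.2 Hs hHsne
  haveI : Fintype ↥Hs.verts := Fintype.ofFinite _
  obtain ⟨cH, hcH⟩ := chrom_spec Hs.coe
  have hcHk : PC Hs.coe.edgeSet k cH :=
    PC_mono (show edgeChromaticNumber Hs.coe ≤ k by omega) hcH
  -- transfer the coloring to a coloring of G minus xy
  set emb : V → ↥Hs.verts := fun v => ⟨v, Set.mem_univ v⟩ with hemb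
  have hembinj : Function.Injective emb := fun a b h => congrArg Subtype.val h
  set φ : Sym2 V → ℕ := fun e => cH (Sym2.map emb e) with hφdef
  have hmemc : ∀ a b : V, s(a,b) ∈ Exy G x y → Hs.coe.Adj (emb a) (emb b) := by
    intro a b hab
    rw [Subgraph.coe_adj]
    exact ⟨G.mem_edgeSet.mp hab.1, hab.2⟩
  have hφ : PC (Exy G x y) k φ := by
    constructor
    · intro e he
      induction e with
      | _ a b =>
        rw [hφdef]
        simp only [Sym2.map_pair_eq]
        exact hcHk.1 _ ((Hs.coe.mem_edgeSet).mpr (hmemc a b he))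
    · intro e₁ he₁ e₂ he₂ hne hsh
      obtain ⟨v, hv₁, hv₂⟩ := hsh
      induction e₁ with
      | _ a b =>
        induction e₂ with
        | _ a' b' =>
          rw [hφdef]
          simp only [Sym2.map_pair_eq]
          refine hcHk.2 _ ((Hs.coe.mem_edgeSet).mpr (hmemc a b he₁)) _
            ((Hs.coe.mem_edgeSet).mpr (hmemc a' b' he₂)) ?_ ?_
          · intro h
            rw [← Sym2.map_pair_eq, ← Sym2.map_pair_eq] at h
            exact hne (Sym2.map.injective hembinj h)
          · refine ⟨emb v, ?_, ?_⟩
            · rcases Sym2.mem_iff.mp hv₁ with rfl | rfl <;> simp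
            · rcases Sym2.mem_iff.mp hv₂ with rfl | rfl <;> simp
  -- apply the master counting lemma
  have hmain := master hxy NoExt hφ hkΔ (fun v => deg_le_maxDeg v)
  -- relate to the target set
  have hsub : (((Zf G x y φ).erase y).filter (fun z => deg G z = maxDeg G)).card ≤
      {z | z ∈ G.neighborSet x ∧ z ≠ y ∧ deg G z = maxDeg G}.ncard := by
    rw [Set.ncard_eq_toFinset_card']
    refine Finset.card_le_card ?_
    intro z hz
    rw [Finset.mem_filter, Finset.mem_erase] at hz
    obtain ⟨⟨hzy, hzZ⟩, hzd⟩ := hz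
    rw [Set.mem_toFinset]
    exact ⟨Zset_adj hxy (mem_Zf.mp hzZ), hzy, hzd⟩
  have hdy : deg G y ≤ maxDeg G := deg_le_maxDeg y
  omega
end

section
/- Let G be a critical graph and let xy be an edge of G with d_G(x) + d_G(y) = Δ(G) + 2. Then every vertex of (N(x) ∪ N(y)) \ {x, y} has degree Δ(G), where N(v) denotes the set of neighbors of v. -/
open SimpleGraph

variable {V : Type*}

section Aux
variable {V : Type*}

def SProper (S : Set (Sym2 V)) (n : ℕ) (c : Sym2 V → ℕ) : Prop :=
  (∀ e ∈ S, c e < n) ∧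
    ∀ e₁ ∈ S, ∀ e₂ ∈ S, e₁ ≠ e₂ → (∃ v, v ∈ e₁ ∧ v ∈ e₂) → c e₁ ≠ c e₂

lemma SProper.mono {S : Set (Sym2 V)} {n m : ℕ} {c : Sym2 V → ℕ}
    (h : SProper S n c) (hnm : n ≤ m) : SProper S m c :=
  ⟨fun e he => lt_of_lt_of_le (h.1 e he) hnm, h.2⟩

lemma SProper.colors_ne {S : Set (Sym2 V)} {n : ℕ} {c : Sym2 V → ℕ} (h : SProper S n c)
    {v w₁ w₂ : V} (h1 : s(v, w₁) ∈ S) (h2 : s(v, w₂) ∈ S) (hw : w₁ ≠ w₂) :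
    c s(v, w₁) ≠ c s(v, w₂) :=
  h.2 _ h1 _ h2 (fun he => hw (Sym2.congr_right.mp he))
    ⟨v, Sym2.mem_mk_left _ _, Sym2.mem_mk_left _ _⟩

lemma exists_sproper (W : Type*) [Finite W] (S : Set (Sym2 W)) : ∃ n c, SProper S n c := by
  obtain ⟨n, ⟨e⟩⟩ := Finite.exists_equiv_fin (Sym2 W)
  refine ⟨n, fun s => (e s : ℕ), fun s _ => (e s).isLt, ?_⟩
  intro e₁ _ e₂ _ hne _ hv
  exact hne (e.injective (Fin.val_injective hv))

open Classical in
noncomputable def NbrF [Fintype V] (S : Set (Sym2 V)) (v : V) : Finset V :=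
  Finset.univ.filter (fun w => s(v, w) ∈ S)

lemma mem_NbrF [Fintype V] {S : Set (Sym2 V)} {v w : V} : w ∈ NbrF S v ↔ s(v, w) ∈ S := by
  classical simp [NbrF]

open Classical in
noncomputable def CAf [Fintype V] (S : Set (Sym2 V)) (c : Sym2 V → ℕ) (v : V) : Finset ℕ :=
  (NbrF S v).image (fun w => c s(v, w))

lemma mem_CAf [Fintype V] {S : Set (Sym2 V)} {c : Sym2 V → ℕ} {v : V} {a : ℕ} :
    a ∈ CAf S c v ↔ ∃ w, s(v, w) ∈ S ∧ c s(v, w) = a := by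
  classical simp [CAf, mem_NbrF]

lemma CAf_subset_range [Fintype V] {S : Set (Sym2 V)} {n : ℕ} {c : Sym2 V → ℕ}
    (h : SProper S n c) (v : V) : CAf S c v ⊆ Finset.range n := by
  intro a ha
  rw [mem_CAf] at ha
  obtain ⟨w, hw, rfl⟩ := ha
  exact Finset.mem_range.mpr (h.1 _ hw)

lemma card_CAf [Fintype V] {S : Set (Sym2 V)} {n : ℕ} {c : Sym2 V → ℕ}
    (h : SProper S n c) (v : V) : (CAf S c v).card = (NbrF S v).card := by
  classical
  apply Finset.card_image_of_injOn
  intro w₁ h₁ w₂ h₂ he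
  by_contra hne
  exact h.colors_ne (mem_NbrF.mp h₁) (mem_NbrF.mp h₂) hne he

lemma card_NbrF_edgeSet [Fintype V] (G : SimpleGraph V) (v : V) :
    (NbrF G.edgeSet v).card = deg G v := by
  classical
  rw [deg, ← Set.ncard_coe_finset (NbrF G.edgeSet v)]
  congr 1
  ext w
  simp [mem_NbrF]

lemma NbrF_del_eq [Fintype V] {G : SimpleGraph V} {x y : V} (v : V) (hvx : v ≠ x) (hvy : v ≠ y) :
    NbrF (G.edgeSet \ {s(x, y)}) v = NbrF G.edgeSet v := by
  ext w
  simp only [mem_NbrF, Set.mem_diff, Set.mem_singleton_iff, and_iff_left_iff_imp]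
  intro _
  intro he
  have hv : v ∈ s(x, y) := he ▸ Sym2.mem_mk_left v w
  rcases Sym2.mem_iff.mp hv with h | h
  · exact hvx h
  · exact hvy h

lemma NbrF_del_x [Fintype V] [DecidableEq V] {G : SimpleGraph V} {x y : V} :
    NbrF (G.edgeSet \ {s(x, y)}) x = (NbrF G.edgeSet x).erase y := by
  ext w
  simp only [mem_NbrF, Finset.mem_erase, Set.mem_diff, Set.mem_singleton_iff]
  constructor
  · rintro ⟨h1, h2⟩
    exact ⟨fun hw => h2 (by rw [hw]), h1⟩
  · rintro ⟨h1, h2⟩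
    exact ⟨h2, fun he => h1 (Sym2.congr_right.mp he)⟩

lemma NbrF_del_y [Fintype V] [DecidableEq V] {G : SimpleGraph V} {x y : V} :
    NbrF (G.edgeSet \ {s(x, y)}) y = (NbrF G.edgeSet y).erase x := by
  ext w
  simp only [mem_NbrF, Finset.mem_erase, Set.mem_diff, Set.mem_singleton_iff]
  have hxy : s(x, y) = s(y, x) := Sym2.eq_swap
  constructor
  · rintro ⟨h1, h2⟩
    exact ⟨fun hw => h2 (by rw [hw, ← hxy]), h1⟩
  · rintro ⟨h1, h2⟩
    refine ⟨h2, fun he => h1 ?_⟩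
    rw [hxy] at he
    exact Sym2.congr_right.mp he

lemma deg_le_card [Fintype V] (G : SimpleGraph V) (v : V) : deg G v ≤ Fintype.card V := by
  rw [deg]
  calc (G.neighborSet v).ncard ≤ (Set.univ : Set V).ncard :=
        Set.ncard_le_ncard (Set.subset_univ _) Set.finite_univ
    _ = Fintype.card V := by rw [Set.ncard_univ, Nat.card_eq_fintype_card]

lemma deg_le_maxDeg [Fintype V] (G : SimpleGraph V) (v : V) : deg G v ≤ maxDeg G :=
  le_csSup ⟨Fintype.card V, by rintro d ⟨w, rfl⟩; exact deg_le_card G w⟩ ⟨v, rfl⟩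

lemma exists_deg_maxDeg [Fintype V] (G : SimpleGraph V) (v₀ : V) : ∃ v, deg G v = maxDeg G := by
  have h := Nat.sSup_mem (s := {d | ∃ v, deg G v = d}) ⟨deg G v₀, v₀, rfl⟩
    ⟨Fintype.card V, by rintro d ⟨w, rfl⟩; exact deg_le_card G w⟩
  exact h

lemma deg_le_of_sproper [Fintype V] {G : SimpleGraph V} {n : ℕ} {c : Sym2 V → ℕ}
    (h : SProper G.edgeSet n c) (v : V) : deg G v ≤ n := by
  have h1 := card_CAf h v
  have h2 := Finset.card_le_card (CAf_subset_range h v)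
  rw [card_NbrF_edgeSet] at h1
  rw [h1, Finset.card_range] at h2
  exact h2

end Aux

section Swap
variable {V : Type*}

def SwapClosed (S : Set (Sym2 V)) (c : Sym2 V → ℕ) (a b : ℕ) (C : Set V) : Prop :=
  ∀ v w, s(v, w) ∈ S → (c s(v, w) = a ∨ c s(v, w) = b) → v ∈ C → w ∈ C

open Classical in
noncomputable def swapc (S : Set (Sym2 V)) (c : Sym2 V → ℕ) (a b : ℕ) (C : Set V) :
    Sym2 V → ℕ :=
  fun e => if e ∈ S ∧ (c e = a ∨ c e = b) ∧ (∃ v ∈ e, v ∈ C) then (if c e = a then b else a) else c e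

lemma swapc_eq_of_ne_colors {S : Set (Sym2 V)} {c : Sym2 V → ℕ} {a b : ℕ} {C : Set V}
    {e : Sym2 V} (h1 : c e ≠ a) (h2 : c e ≠ b) : swapc S c a b C e = c e := by
  simp only [swapc]
  rw [if_neg]
  rintro ⟨_, hcol, _⟩
  tauto

lemma swapc_eq_of_notC {S : Set (Sym2 V)} {c : Sym2 V → ℕ} {a b : ℕ} {C : Set V}
    (hC : SwapClosed S c a b C) {v : V} (hv : v ∉ C) (w : V) :
    swapc S c a b C s(v, w) = c s(v, w) := by
  simp only [swapc]
  rw [if_neg]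
  rintro ⟨hS, hcol, t, ht, htC⟩
  rcases Sym2.mem_iff.mp ht with rfl | rfl
  · exact hv htC
  · refine hv (hC t v ?_ ?_ htC)
    · rwa [Sym2.eq_swap]
    · rwa [Sym2.eq_swap]

lemma CAf_swapc_of_notC [Fintype V] {S : Set (Sym2 V)} {c : Sym2 V → ℕ} {a b : ℕ} {C : Set V}
    (hC : SwapClosed S c a b C) {v : V} (hv : v ∉ C) :
    CAf S (swapc S c a b C) v = CAf S c v := by
  ext t
  rw [mem_CAf, mem_CAf]
  refine exists_congr fun w => and_congr_right fun _ => ?_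
  rw [swapc_eq_of_notC hC hv w]

lemma swap_endpoints {S : Set (Sym2 V)} {c : Sym2 V → ℕ} {a b : ℕ} {C : Set V}
    (hC : SwapClosed S c a b C) {e : Sym2 V} (he : e ∈ S)
    (hcol : c e = a ∨ c e = b) (hex : ∃ v ∈ e, v ∈ C) : ∀ v ∈ e, v ∈ C := by
  induction e using Sym2.ind with
  | _ p q =>
    obtain ⟨t, ht, htC⟩ := hex
    have hpq : p ∈ C ∧ q ∈ C := by
      rcases Sym2.mem_iff.mp ht with rfl | rfl
      · exact ⟨htC, hC t q he hcol htC⟩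
      · refine ⟨hC t p ?_ ?_ htC, htC⟩
        · rwa [Sym2.eq_swap]
        · rwa [Sym2.eq_swap]
    intro v hv
    rcases Sym2.mem_iff.mp hv with rfl | rfl
    · exact hpq.1
    · exact hpq.2

lemma swapc_sproper {S : Set (Sym2 V)} {c : Sym2 V → ℕ} {a b n : ℕ} {C : Set V}
    (h : SProper S n c) (hC : SwapClosed S c a b C)
    (ha : a < n) (hb : b < n) : SProper S n (swapc S c a b C) := by
  classical
  constructor
  · intro e he
    simp only [swapc]
    split
    · split
      · exact hb
      · exact ha
    · exact h.1 e he
  · intro e₁ he₁ e₂ he₂ hne hshare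
    have hcc := h.2 e₁ he₁ e₂ he₂ hne hshare
    simp only [swapc]
    by_cases h₁ : e₁ ∈ S ∧ (c e₁ = a ∨ c e₁ = b) ∧ (∃ v ∈ e₁, v ∈ C) <;>
      by_cases h₂ : e₂ ∈ S ∧ (c e₂ = a ∨ c e₂ = b) ∧ (∃ v ∈ e₂, v ∈ C)
    · rw [if_pos h₁, if_pos h₂]
      rcases h₁.2.1 with hc1 | hc1 <;> rcases h₂.2.1 with hc2 | hc2
      · exact absurd (hc1.trans hc2.symm) hcc
      · have hab : a ≠ b := fun hE => hcc (by rw [hc1, hc2, hE])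
        rw [if_pos hc1, if_neg (by rw [hc2]; exact Ne.symm hab)]
        exact Ne.symm hab
      · have hab : a ≠ b := fun hE => hcc (by rw [hc1, hc2, hE])
        rw [if_neg (by rw [hc1]; exact Ne.symm hab), if_pos hc2]
        exact hab
      · exact absurd (hc1.trans hc2.symm) hcc
    · rw [if_pos h₁, if_neg h₂]
      have hc2' : c e₂ ≠ a ∧ c e₂ ≠ b := by
        by_contra hcon
        apply h₂
        refine ⟨he₂, by tauto, ?_⟩
        obtain ⟨v, hv₁, hv₂⟩ := hshare
        exact ⟨v, hv₂, swap_endpoints hC h₁.1 h₁.2.1 h₁.2.2 v hv₁⟩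
      split
      · exact fun hE => hc2'.2 hE.symm
      · exact fun hE => hc2'.1 hE.symm
    · rw [if_neg h₁, if_pos h₂]
      have hc1' : c e₁ ≠ a ∧ c e₁ ≠ b := by
        by_contra hcon
        apply h₁
        refine ⟨he₁, by tauto, ?_⟩
        obtain ⟨v, hv₁, hv₂⟩ := hshare
        exact ⟨v, hv₁, swap_endpoints hC h₂.1 h₂.2.1 h₂.2.2 v hv₂⟩
      split
      · exact hc1'.2
      · exact hc1'.1
    · rw [if_neg h₁, if_neg h₂]
      exact hcc

lemma swapc_eq_a_iff {S : Set (Sym2 V)} {c : Sym2 V → ℕ} {a b : ℕ} {C : Set V}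
    (hab : a ≠ b) {v w : V} (hS : s(v, w) ∈ S) (hv : v ∈ C) :
    swapc S c a b C s(v, w) = a ↔ c s(v, w) = b := by
  simp only [swapc]
  by_cases hcol : c s(v, w) = a ∨ c s(v, w) = b
  · rw [if_pos ⟨hS, hcol, v, Sym2.mem_mk_left _ _, hv⟩]
    rcases hcol with h | h
    · rw [if_pos h, h]
      exact eq_comm
    · rw [if_neg (by rw [h]; exact Ne.symm hab), h]
      exact ⟨fun _ => rfl, fun _ => rfl⟩
  · push_neg at hcol
    rw [if_neg (fun hcon => by tauto)]
    exact ⟨fun hE => absurd hE hcol.1, fun hE => absurd hE hcol.2⟩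

lemma swapc_eq_b_iff {S : Set (Sym2 V)} {c : Sym2 V → ℕ} {a b : ℕ} {C : Set V}
    (hab : a ≠ b) {v w : V} (hS : s(v, w) ∈ S) (hv : v ∈ C) :
    swapc S c a b C s(v, w) = b ↔ c s(v, w) = a := by
  simp only [swapc]
  by_cases hcol : c s(v, w) = a ∨ c s(v, w) = b
  · rw [if_pos ⟨hS, hcol, v, Sym2.mem_mk_left _ _, hv⟩]
    rcases hcol with h | h
    · rw [if_pos h, h]
      exact ⟨fun _ => rfl, fun _ => rfl⟩
    · rw [if_neg (by rw [h]; exact Ne.symm hab), h]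
      exact eq_comm
  · push_neg at hcol
    rw [if_neg (fun hcon => by tauto)]
    exact ⟨fun hE => absurd hE hcol.2, fun hE => absurd hE hcol.1⟩

lemma a_mem_CAf_swapc_iff [Fintype V] {S : Set (Sym2 V)} {c : Sym2 V → ℕ} {a b : ℕ} {C : Set V}
    (hab : a ≠ b) {v : V} (hv : v ∈ C) :
    a ∈ CAf S (swapc S c a b C) v ↔ b ∈ CAf S c v := by
  rw [mem_CAf, mem_CAf]
  exact exists_congr fun w => and_congr_right fun hS => swapc_eq_a_iff hab hS hv

lemma b_mem_CAf_swapc_iff [Fintype V] {S : Set (Sym2 V)} {c : Sym2 V → ℕ} {a b : ℕ} {C : Set V}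
    (hab : a ≠ b) {v : V} (hv : v ∈ C) :
    b ∈ CAf S (swapc S c a b C) v ↔ a ∈ CAf S c v := by
  rw [mem_CAf, mem_CAf]
  exact exists_congr fun w => and_congr_right fun hS => swapc_eq_b_iff hab hS hv

end Swap

section Ext
variable {V : Type*}

lemma noExt [Fintype V] {G : SimpleGraph V} {x y : V} (hxy : G.Adj x y) {k : ℕ}
    (hk : k < edgeChromaticNumber G) {c : Sym2 V → ℕ}
    (hc : SProper (G.edgeSet \ {s(x, y)}) k c) {α : ℕ} (hα : α < k)
    (hax : α ∉ CAf (G.edgeSet \ {s(x, y)}) c x)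
    (hay : α ∉ CAf (G.edgeSet \ {s(x, y)}) c y) : False := by
  classical
  set S := G.edgeSet \ {s(x, y)} with hS
  set c' : Sym2 V → ℕ := fun e => if e = s(x, y) then α else c e with hc'
  have hproper : SProper G.edgeSet k c' := by
    constructor
    · intro e he
      by_cases h : e = s(x, y)
      · simp [hc', h, hα]
      · have heS : e ∈ S := ⟨he, h⟩
        simp only [hc', if_neg h]
        exact hc.1 e heS
    · intro e₁ he₁ e₂ he₂ hne hshare
      by_cases h₁ : e₁ = s(x, y) <;> by_cases h₂ : e₂ = s(x, y)
      · exact absurd (h₁.trans h₂.symm) hne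
      · simp only [hc', if_pos h₁, if_neg h₂]
        obtain ⟨v, hv₁, hv₂⟩ := hshare
        have he₂S : e₂ ∈ S := ⟨he₂, h₂⟩
        subst h₁
        rcases Sym2.mem_iff.mp hv₁ with rfl | rfl
        · obtain ⟨w, rfl⟩ := Sym2.mem_iff_exists.mp hv₂
          exact fun hE => hax (mem_CAf.mpr ⟨w, he₂S, hE.symm⟩)
        · obtain ⟨w, rfl⟩ := Sym2.mem_iff_exists.mp hv₂
          exact fun hE => hay (mem_CAf.mpr ⟨w, he₂S, hE.symm⟩)
      · simp only [hc', if_neg h₁, if_pos h₂]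
        obtain ⟨v, hv₁, hv₂⟩ := hshare
        have he₁S : e₁ ∈ S := ⟨he₁, h₁⟩
        subst h₂
        rcases Sym2.mem_iff.mp hv₂ with rfl | rfl
        · obtain ⟨w, rfl⟩ := Sym2.mem_iff_exists.mp hv₁
          exact fun hE => hax (mem_CAf.mpr ⟨w, he₁S, hE⟩)
        · obtain ⟨w, rfl⟩ := Sym2.mem_iff_exists.mp hv₁
          exact fun hE => hay (mem_CAf.mpr ⟨w, he₁S, hE⟩)
      · simp only [hc', if_neg h₁, if_neg h₂]
        exact hc.2 e₁ ⟨he₁, h₁⟩ e₂ ⟨he₂, h₂⟩ hne hshare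
  have hle : edgeChromaticNumber G ≤ k := Nat.sInf_le ⟨c', hproper⟩
  omega

lemma recolorExt [Fintype V] {G : SimpleGraph V} {x y : V} (hxy : G.Adj x y) {k : ℕ}
    (hk : k < edgeChromaticNumber G) {c : Sym2 V → ℕ}
    (hc : SProper (G.edgeSet \ {s(x, y)}) k c) {u : V} {γ : ℕ}
    (hu : G.Adj x u) (huy : u ≠ y) (hγ : γ < k)
    (hγx : γ ∉ CAf (G.edgeSet \ {s(x, y)}) c x)
    (hγu : γ ∉ CAf (G.edgeSet \ {s(x, y)}) c u)
    (hay : c s(x, u) ∉ CAf (G.edgeSet \ {s(x, y)}) c y) : False := by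
  classical
  set S := G.edgeSet \ {s(x, y)} with hSdef
  have hxuS : s(x, u) ∈ S := ⟨hu, fun hE => huy (Sym2.congr_right.mp hE)⟩
  set α := c s(x, u) with hα
  have hαk : α < k := hc.1 _ hxuS
  have hαx : α ∈ CAf S c x := mem_CAf.mpr ⟨u, hxuS, rfl⟩
  have hγα : γ ≠ α := fun hE => hγx (hE ▸ hαx)
  set c₂ : Sym2 V → ℕ := fun e => if e = s(x, u) then γ else c e with hc₂def
  have hc₂ : SProper S k c₂ := by
    constructor
    · intro e he
      by_cases h : e = s(x, u)
      · simp [hc₂def, h, hγ]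
      · simp only [hc₂def, if_neg h]
        exact hc.1 e he
    · intro e₁ he₁ e₂ he₂ hne hshare
      by_cases h₁ : e₁ = s(x, u) <;> by_cases h₂ : e₂ = s(x, u)
      · exact absurd (h₁.trans h₂.symm) hne
      · simp only [hc₂def, if_pos h₁, if_neg h₂]
        obtain ⟨v, hv₁, hv₂⟩ := hshare
        subst h₁
        rcases Sym2.mem_iff.mp hv₁ with rfl | rfl
        · obtain ⟨w, rfl⟩ := Sym2.mem_iff_exists.mp hv₂
          exact fun hE => hγx (mem_CAf.mpr ⟨w, he₂, hE.symm⟩)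
        · obtain ⟨w, rfl⟩ := Sym2.mem_iff_exists.mp hv₂
          exact fun hE => hγu (mem_CAf.mpr ⟨w, he₂, hE.symm⟩)
      · simp only [hc₂def, if_neg h₁, if_pos h₂]
        obtain ⟨v, hv₁, hv₂⟩ := hshare
        subst h₂
        rcases Sym2.mem_iff.mp hv₂ with rfl | rfl
        · obtain ⟨w, rfl⟩ := Sym2.mem_iff_exists.mp hv₁
          exact fun hE => hγx (mem_CAf.mpr ⟨w, he₁, hE⟩)
        · obtain ⟨w, rfl⟩ := Sym2.mem_iff_exists.mp hv₁
          exact fun hE => hγu (mem_CAf.mpr ⟨w, he₁, hE⟩)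
      · simp only [hc₂def, if_neg h₁, if_neg h₂]
        exact hc.2 e₁ he₁ e₂ he₂ hne hshare
  have hax₂ : α ∉ CAf S c₂ x := by
    rw [mem_CAf]
    rintro ⟨w, hw, hcw⟩
    by_cases hwu : s(x, w) = s(x, u)
    · rw [hc₂def] at hcw
      simp only [if_pos hwu] at hcw
      exact hγα hcw
    · have hwu' : w ≠ u := fun hE => hwu (by rw [hE])
      rw [hc₂def] at hcw
      simp only [if_neg hwu] at hcw
      exact hc.colors_ne hw hxuS hwu' (hcw.trans hα)
  have hay₂ : α ∉ CAf S c₂ y := by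
    rw [mem_CAf]
    rintro ⟨w, hw, hcw⟩
    have hywu : s(y, w) ≠ s(x, u) := by
      intro hE
      have : y ∈ s(x, u) := hE ▸ Sym2.mem_mk_left y w
      rcases Sym2.mem_iff.mp this with h | h
      · exact hxy.ne' h
      · exact huy h.symm
    rw [hc₂def] at hcw
    simp only [if_neg hywu] at hcw
    exact hay (mem_CAf.mpr ⟨w, hw, hcw⟩)
  exact noExt hxy hk hc₂ hαk hax₂ hay₂

end Ext

section PathArg
variable {V : Type*}

lemma pathAux (K : SimpleGraph V) {y u : V}
    (h2 : ∀ w a₁ a₂ a₃, K.Adj w a₁ → K.Adj w a₂ → K.Adj w a₃ → a₁ = a₂ ∨ a₁ = a₃ ∨ a₂ = a₃)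
    (hy : ∀ a₁ a₂, K.Adj y a₁ → K.Adj y a₂ → a₁ = a₂)
    (hu : ∀ a₁ a₂, K.Adj u a₁ → K.Adj u a₂ → a₁ = a₂)
    (hyu : y ≠ u) :
    ∀ n (v z : V) (P : K.Walk v y) (Q : K.Walk v u), P.length ≤ n → P.IsPath → Q.IsPath →
      K.Adj v z → z ∉ P.support → z ∉ Q.support → False := by
  intro n
  induction n with
  | zero =>
    intro v z P Q hlen hP hQ hvz hzP hzQ
    cases P with
    | nil =>
      cases Q with
      | nil => exact hyu rfl
      | @cons _ q _ hq Q' =>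
        have hqz : q = z := hy _ _ hq hvz
        apply hzQ
        rw [SimpleGraph.Walk.support_cons, ← hqz]
        exact List.mem_cons_of_mem _ Q'.start_mem_support
    | cons hp P' => simp at hlen
  | succ n ih =>
    intro v z P Q hlen hP hQ hvz hzP hzQ
    cases P with
    | nil =>
      cases Q with
      | nil => exact hyu rfl
      | @cons _ q _ hq Q' =>
        have hqz : q = z := hy _ _ hq hvz
        apply hzQ
        rw [SimpleGraph.Walk.support_cons, ← hqz]
        exact List.mem_cons_of_mem _ Q'.start_mem_support
    | @cons _ p _ hp P' =>
      cases Q with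
      | nil =>
        have hpz : p = z := hu _ _ hp hvz
        apply hzP
        rw [SimpleGraph.Walk.support_cons, ← hpz]
        exact List.mem_cons_of_mem _ P'.start_mem_support
      | @cons _ q _ hq Q' =>
        have hpz : p ≠ z := by
          intro hE
          apply hzP
          rw [SimpleGraph.Walk.support_cons, ← hE]
          exact List.mem_cons_of_mem _ P'.start_mem_support
        have hqz : q ≠ z := by
          intro hE
          apply hzQ
          rw [SimpleGraph.Walk.support_cons, ← hE]
          exact List.mem_cons_of_mem _ Q'.start_mem_support
        have hpq : p = q := by
          rcases h2 v z p q hvz hp hq with h | h | h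
          · exact absurd h.symm hpz
          · exact absurd h.symm hqz
          · exact h
        subst hpq
        rw [SimpleGraph.Walk.cons_isPath_iff] at hP hQ
        refine ih p v P' Q' ?_ hP.1 hQ.1 hp.symm hP.2 hQ.2
        simp only [SimpleGraph.Walk.length_cons] at hlen
        omega

lemma pathLemma (K : SimpleGraph V) {x y u : V}
    (h2 : ∀ w a₁ a₂ a₃, K.Adj w a₁ → K.Adj w a₂ → K.Adj w a₃ → a₁ = a₂ ∨ a₁ = a₃ ∨ a₂ = a₃)
    (hx : ∀ a₁ a₂, K.Adj x a₁ → K.Adj x a₂ → a₁ = a₂)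
    (hy : ∀ a₁ a₂, K.Adj y a₁ → K.Adj y a₂ → a₁ = a₂)
    (hu : ∀ a₁ a₂, K.Adj u a₁ → K.Adj u a₂ → a₁ = a₂)
    (hxy : x ≠ y) (hxu : x ≠ u) (hyu : y ≠ u)
    (hry : K.Reachable x y) (hru : K.Reachable x u) : False := by
  classical
  obtain ⟨W₁⟩ := hry
  obtain ⟨W₂⟩ := hru
  obtain ⟨P, hP⟩ : ∃ P : K.Walk x y, P.IsPath := ⟨W₁.toPath.1, W₁.toPath.2⟩
  obtain ⟨Q, hQ⟩ : ∃ Q : K.Walk x u, Q.IsPath := ⟨W₂.toPath.1, W₂.toPath.2⟩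
  cases P with
  | nil => exact hxy rfl
  | @cons _ p _ hp P' =>
    cases Q with
    | nil => exact hxu rfl
    | @cons _ q _ hq Q' =>
      have hpq : p = q := hx _ _ hp hq
      subst hpq
      rw [SimpleGraph.Walk.cons_isPath_iff] at hP hQ
      exact pathAux K h2 hy hu hyu P'.length p x P' Q' le_rfl hP.1 hQ.1 hp.symm hP.2 hQ.2

end PathArg

section Main
variable {V : Type*}

def kempe (S : Set (Sym2 V)) (c : Sym2 V → ℕ) (a b : ℕ) : SimpleGraph V where
  Adj v w := v ≠ w ∧ s(v, w) ∈ S ∧ (c s(v, w) = a ∨ c s(v, w) = b)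
  symm := by
    constructor
    intro v w h
    refine ⟨h.1.symm, ?_, ?_⟩
    · rw [Sym2.eq_swap]
      exact h.2.1
    · rw [Sym2.eq_swap]
      exact h.2.2
  loopless := ⟨fun v h => h.1 rfl⟩

lemma aux_main [Fintype V] {G : SimpleGraph V} (hG : IsCritical G) {x y : V} (hxy : G.Adj x y)
    (hdeg : deg G x + deg G y = maxDeg G + 2) {u : V} (hu : G.Adj x u) (huy : u ≠ y) :
    deg G u = maxDeg G := by
  classical
  set Δ := maxDeg G with hΔdef
  set S := G.edgeSet \ {s(x, y)} with hSdef
  have hxuS : s(x, u) ∈ S := ⟨hu, fun hE => huy (Sym2.congr_right.mp hE)⟩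
  -- χ' ≥ Δ + 1
  have hne0 : {n | ∃ c, IsProperEdgeColoring G n c}.Nonempty := by
    obtain ⟨n, c, h⟩ := exists_sproper V G.edgeSet
    exact ⟨n, c, h⟩
  obtain ⟨c₀, hc₀⟩ := Nat.sInf_mem hne0
  obtain ⟨vm, hvm⟩ := exists_deg_maxDeg G x
  have hΔχ : Δ ≤ edgeChromaticNumber G := by
    rw [hΔdef, ← hvm]
    exact deg_le_of_sproper hc₀ vm
  have hχ : Δ + 1 ≤ edgeChromaticNumber G := by
    have h1 := hG.1
    omega
  -- the subgraph G - xy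
  set H : G.Subgraph :=
    { verts := Set.univ
      Adj := fun a b => G.Adj a b ∧ s(a, b) ≠ s(x, y)
      adj_sub := fun h => h.1
      edge_vert := fun _ => trivial
      symm := by
        constructor
        intro a b h
        refine ⟨h.1.symm, ?_⟩
        rw [Sym2.eq_swap]
        exact h.2 } with hHdef
  have hHne : H ≠ ⊤ := by
    intro hE
    have hxyH : H.Adj x y := by
      rw [hE]
      exact hxy
    exact hxyH.2 rfl
  have hm := hG.2 H hHne
  -- get a coloring of H.coe with (edgeChromaticNumber H.coe) colors
  have hne1 : {n | ∃ cc, IsProperEdgeColoring H.coe n cc}.Nonempty := by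
    obtain ⟨n, cc, h⟩ := exists_sproper ↥H.verts H.coe.edgeSet
    exact ⟨n, cc, h⟩
  obtain ⟨cH, hcH⟩ := Nat.sInf_mem hne1
  -- transfer to a coloring of S over V
  set ι : V → ↥H.verts := fun v => ⟨v, trivial⟩ with hι
  have hιinj : Function.Injective ι := fun a b h => congrArg Subtype.val h
  set c₁ : Sym2 V → ℕ := fun e => cH (Sym2.map ι e) with hc₁def
  have hmemS : ∀ e ∈ S, Sym2.map ι e ∈ H.coe.edgeSet := by
    intro e he
    induction e using Sym2.ind with
    | _ a b =>
      rw [Sym2.map_pair_eq]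
      rw [SimpleGraph.mem_edgeSet, SimpleGraph.Subgraph.coe_adj]
      exact ⟨G.mem_edgeSet.mp he.1, he.2⟩
  have hc₁p : SProper S (edgeChromaticNumber H.coe) c₁ := by
    constructor
    · intro e he
      exact hcH.1 _ (hmemS e he)
    · intro e₁ he₁ e₂ he₂ hne hsh
      obtain ⟨v, hv₁, hv₂⟩ := hsh
      exact hcH.2 _ (hmemS e₁ he₁) _ (hmemS e₂ he₂)
        (fun hE => hne (Sym2.map.injective hιinj hE))
        ⟨ι v, Sym2.mem_map.mpr ⟨v, hv₁, rfl⟩, Sym2.mem_map.mpr ⟨v, hv₂, rfl⟩⟩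
  -- pad the coloring to k := max m Δ colors, then show k = Δ
  set k := max (edgeChromaticNumber H.coe) Δ with hkdef
  have hc₂ : SProper S k c₁ := hc₁p.mono (le_max_left _ _)
  have hkχ : k < edgeChromaticNumber G := max_lt hm (by omega)
  have hcard_x : (CAf S c₁ x).card = deg G x - 1 := by
    rw [card_CAf hc₂ x, hSdef, NbrF_del_x, Finset.card_erase_of_mem (mem_NbrF.mpr hxy),
      card_NbrF_edgeSet]
  have hcard_y : (CAf S c₁ y).card = deg G y - 1 := by
    rw [card_CAf hc₂ y, hSdef, NbrF_del_y, Finset.card_erase_of_mem (mem_NbrF.mpr hxy.symm),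
      card_NbrF_edgeSet]
  have hdx1 : 0 < deg G x := (Set.ncard_pos (Set.toFinite _)).mpr ⟨y, hxy⟩
  have hdy1 : 0 < deg G y := (Set.ncard_pos (Set.toFinite _)).mpr ⟨x, hxy.symm⟩
  have hcov : ∀ a, a < k → a ∈ CAf S c₁ x ∨ a ∈ CAf S c₁ y := by
    intro a ha
    by_contra hcon
    push_neg at hcon
    exact noExt hxy hkχ hc₂ ha hcon.1 hcon.2
  have hsub : Finset.range k ⊆ CAf S c₁ x ∪ CAf S c₁ y := by
    intro a ha
    rcases hcov a (Finset.mem_range.mp ha) with h | h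
    · exact Finset.mem_union_left _ h
    · exact Finset.mem_union_right _ h
  have hkle : k ≤ Δ := by
    have h1 : (Finset.range k).card ≤ (CAf S c₁ x ∪ CAf S c₁ y).card := Finset.card_le_card hsub
    have h2 : (CAf S c₁ x ∪ CAf S c₁ y).card ≤ (CAf S c₁ x).card + (CAf S c₁ y).card :=
      Finset.card_union_le _ _
    rw [Finset.card_range] at h1
    rw [hcard_x, hcard_y] at h2
    omega
  have hkΔ : k = Δ := le_antisymm hkle (le_max_right _ _)
  rw [hkΔ] at hc₂ hkχ hcov hsub
  -- disjointness of missing sets / covering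
  have huni : CAf S c₁ x ∪ CAf S c₁ y = Finset.range Δ :=
    Finset.Subset.antisymm
      (Finset.union_subset (CAf_subset_range hc₂ x) (CAf_subset_range hc₂ y)) hsub
  have hdisj : ∀ a, a ∈ CAf S c₁ x → a ∉ CAf S c₁ y := by
    intro a ha hb
    have h3 := Finset.card_union_add_card_inter (CAf S c₁ x) (CAf S c₁ y)
    rw [huni, Finset.card_range, hcard_x, hcard_y] at h3
    have h4 : (CAf S c₁ x ∩ CAf S c₁ y).card = 0 := by omega
    have h5 : a ∈ CAf S c₁ x ∩ CAf S c₁ y := Finset.mem_inter.mpr ⟨ha, hb⟩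
    rw [Finset.card_eq_zero.mp h4] at h5
    simp at h5
  -- main contradiction
  by_contra hneq
  have hult : deg G u < Δ := lt_of_le_of_ne (deg_le_maxDeg G u) hneq
  have hcard_u : (CAf S c₁ u).card = deg G u := by
    rw [card_CAf hc₂ u, hSdef, NbrF_del_eq u hu.ne' huy, card_NbrF_edgeSet]
  have hβex : (Finset.range Δ \ CAf S c₁ u).Nonempty := by
    apply Finset.card_pos.mp
    rw [Finset.card_sdiff_of_subset (CAf_subset_range hc₂ u), Finset.card_range]
    omega
  obtain ⟨β, hβ⟩ := hβex
  rw [Finset.mem_sdiff, Finset.mem_range] at hβ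
  obtain ⟨hβΔ, hβu⟩ := hβ
  by_cases hβx : β ∈ CAf S c₁ x
  · -- β present at x, hence missing at y; pick γ missing at x and run Kempe chains
    have hβy : β ∉ CAf S c₁ y := hdisj β hβx
    have hγex : (Finset.range Δ \ CAf S c₁ x).Nonempty := by
      apply Finset.card_pos.mp
      rw [Finset.card_sdiff_of_subset (CAf_subset_range hc₂ x), Finset.card_range, hcard_x]
      have := deg_le_maxDeg G x
      omega
    obtain ⟨γ, hγ⟩ := hγex
    rw [Finset.mem_sdiff, Finset.mem_range] at hγ
    obtain ⟨hγΔ, hγx⟩ := hγ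
    have hγβ : γ ≠ β := fun hE => hγx (hE ▸ hβx)
    have hKdeg2 : ∀ w a₁ a₂ a₃, (kempe S c₁ γ β).Adj w a₁ → (kempe S c₁ γ β).Adj w a₂ →
        (kempe S c₁ γ β).Adj w a₃ → a₁ = a₂ ∨ a₁ = a₃ ∨ a₂ = a₃ := by
      intro w a₁ a₂ a₃ h1 h2 h3
      by_contra hcon
      push_neg at hcon
      obtain ⟨h12, h13, h23⟩ := hcon
      have c12 := hc₂.colors_ne h1.2.1 h2.2.1 h12
      have c13 := hc₂.colors_ne h1.2.1 h3.2.1 h13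
      have c23 := hc₂.colors_ne h2.2.1 h3.2.1 h23
      rcases h1.2.2 with e1 | e1 <;> rcases h2.2.2 with e2 | e2 <;>
        rcases h3.2.2 with e3 | e3 <;> omega
    have hKx : ∀ a₁ a₂, (kempe S c₁ γ β).Adj x a₁ → (kempe S c₁ γ β).Adj x a₂ → a₁ = a₂ := by
      intro a₁ a₂ h1 h2
      have e1 : c₁ s(x, a₁) = β := by
        rcases h1.2.2 with e | e
        · exact absurd (mem_CAf.mpr ⟨a₁, h1.2.1, e⟩) hγx
        · exact e
      have e2 : c₁ s(x, a₂) = β := by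
        rcases h2.2.2 with e | e
        · exact absurd (mem_CAf.mpr ⟨a₂, h2.2.1, e⟩) hγx
        · exact e
      by_contra hne12
      exact hc₂.colors_ne h1.2.1 h2.2.1 hne12 (e1.trans e2.symm)
    have hKy : ∀ a₁ a₂, (kempe S c₁ γ β).Adj y a₁ → (kempe S c₁ γ β).Adj y a₂ → a₁ = a₂ := by
      intro a₁ a₂ h1 h2
      have e1 : c₁ s(y, a₁) = γ := by
        rcases h1.2.2 with e | e
        · exact e
        · exact absurd (mem_CAf.mpr ⟨a₁, h1.2.1, e⟩) hβy
      have e2 : c₁ s(y, a₂) = γ := by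
        rcases h2.2.2 with e | e
        · exact e
        · exact absurd (mem_CAf.mpr ⟨a₂, h2.2.1, e⟩) hβy
      by_contra hne12
      exact hc₂.colors_ne h1.2.1 h2.2.1 hne12 (e1.trans e2.symm)
    have hKu : ∀ a₁ a₂, (kempe S c₁ γ β).Adj u a₁ → (kempe S c₁ γ β).Adj u a₂ → a₁ = a₂ := by
      intro a₁ a₂ h1 h2
      have e1 : c₁ s(u, a₁) = γ := by
        rcases h1.2.2 with e | e
        · exact e
        · exact absurd (mem_CAf.mpr ⟨a₁, h1.2.1, e⟩) hβu
      have e2 : c₁ s(u, a₂) = γ := by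
        rcases h2.2.2 with e | e
        · exact e
        · exact absurd (mem_CAf.mpr ⟨a₂, h2.2.1, e⟩) hβu
      by_contra hne12
      exact hc₂.colors_ne h1.2.1 h2.2.1 hne12 (e1.trans e2.symm)
    by_cases hRy : (kempe S c₁ γ β).Reachable x y
    · by_cases hRu : (kempe S c₁ γ β).Reachable x u
      · exact pathLemma (kempe S c₁ γ β) hKdeg2 hKx hKy hKu hxy.ne hu.ne (Ne.symm huy) hRy hRu
      · -- swap the component of u
        have hclosed : SwapClosed S c₁ γ β {w | (kempe S c₁ γ β).Reachable u w} := by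
          intro v w hvw hcol hvC
          have hadj : (kempe S c₁ γ β).Adj v w :=
            ⟨(G.mem_edgeSet.mp hvw.1).ne, hvw, hcol⟩
          exact hvC.trans ⟨hadj.toWalk⟩
        have huC : u ∈ {w | (kempe S c₁ γ β).Reachable u w} := SimpleGraph.Reachable.refl u
        have hxC : x ∉ {w | (kempe S c₁ γ β).Reachable u w} := fun h => hRu h.symm
        have hyC : y ∉ {w | (kempe S c₁ γ β).Reachable u w} :=
          fun h => hRu (hRy.trans h.symm)
        have hc'p : SProper S Δ (swapc S c₁ γ β {w | (kempe S c₁ γ β).Reachable u w}) :=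
          swapc_sproper hc₂ hclosed hγΔ hβΔ
        have hγ'x : γ ∉ CAf S (swapc S c₁ γ β {w | (kempe S c₁ γ β).Reachable u w}) x := by
          rw [CAf_swapc_of_notC hclosed hxC]
          exact hγx
        have hγ'u : γ ∉ CAf S (swapc S c₁ γ β {w | (kempe S c₁ γ β).Reachable u w}) u := by
          rw [a_mem_CAf_swapc_iff hγβ huC]
          exact hβu
        have hα'eq : swapc S c₁ γ β {w | (kempe S c₁ γ β).Reachable u w} s(x, u) =
            c₁ s(x, u) := by
          apply swapc_eq_of_ne_colors
          · exact fun hE => hγx (mem_CAf.mpr ⟨u, hxuS, hE⟩)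
          · intro hE
            apply hβu
            refine mem_CAf.mpr ⟨x, ?_, ?_⟩
            · rw [Sym2.eq_swap]
              exact hxuS
            · rw [Sym2.eq_swap]
              exact hE
        have hay' : swapc S c₁ γ β {w | (kempe S c₁ γ β).Reachable u w} s(x, u) ∉
            CAf S (swapc S c₁ γ β {w | (kempe S c₁ γ β).Reachable u w}) y := by
          rw [hα'eq, CAf_swapc_of_notC hclosed hyC]
          exact hdisj _ (mem_CAf.mpr ⟨u, hxuS, rfl⟩)
        exact recolorExt hxy hkχ hc'p hu huy hγΔ hγ'x hγ'u hay'
    · -- swap the component of x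
      have hclosed : SwapClosed S c₁ γ β {w | (kempe S c₁ γ β).Reachable x w} := by
        intro v w hvw hcol hvC
        have hadj : (kempe S c₁ γ β).Adj v w :=
          ⟨(G.mem_edgeSet.mp hvw.1).ne, hvw, hcol⟩
        exact hvC.trans ⟨hadj.toWalk⟩
      have hxC : x ∈ {w | (kempe S c₁ γ β).Reachable x w} := SimpleGraph.Reachable.refl x
      have hyC : y ∉ {w | (kempe S c₁ γ β).Reachable x w} := hRy
      have hc'p : SProper S Δ (swapc S c₁ γ β {w | (kempe S c₁ γ β).Reachable x w}) :=
        swapc_sproper hc₂ hclosed hγΔ hβΔ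
      have hβ'x : β ∉ CAf S (swapc S c₁ γ β {w | (kempe S c₁ γ β).Reachable x w}) x := by
        rw [b_mem_CAf_swapc_iff hγβ hxC]
        exact hγx
      have hβ'y : β ∉ CAf S (swapc S c₁ γ β {w | (kempe S c₁ γ β).Reachable x w}) y := by
        rw [CAf_swapc_of_notC hclosed hyC]
        exact hβy
      exact noExt hxy hkχ hc'p hβΔ hβ'x hβ'y
  · -- β missing at x and at u: recolor xu with β
    have hay : c₁ s(x, u) ∉ CAf S c₁ y := hdisj _ (mem_CAf.mpr ⟨u, hxuS, rfl⟩)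
    exact recolorExt hxy hkχ hc₂ hu huy hβΔ hβx hβu hay

end Main

/-- If `G` is critical and `xy ∈ E(G)` with `d_G(x) + d_G(y) = Δ(G) + 2`,
then every vertex of `(N(x) ∪ N(y)) \ {x, y}` has degree `Δ(G)`. -/
theorem critical_neighbors_maxDegree [Fintype V] (G : SimpleGraph V)
    (hG : IsCritical G) {x y : V} (hxy : G.Adj x y)
    (hdeg : deg G x + deg G y = maxDeg G + 2) :
    ∀ u ∈ (G.neighborSet x ∪ G.neighborSet y) \ {x, y}, deg G u = maxDeg G := by
  intro u hu
  obtain ⟨hmem, hnot⟩ := hu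
  have hux : u ≠ x := fun h => hnot (by rw [h]; exact Set.mem_insert _ _)
  have huy : u ≠ y := fun h => hnot (by rw [h]; exact Set.mem_insert_of_mem _ rfl)
  rcases hmem with h | h
  · exact aux_main hG hxy hdeg h huy
  · have hdeg' : deg G y + deg G x = maxDeg G + 2 := by omega
    exact aux_main hG hxy.symm hdeg' h hux
end
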